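/- arXiv:2009.02505 — 4 statements merged into one kernel-verified Lean document; each statement's English description precedes it below -/
import Mathlib

section
/- Let $I_n=(t_{n-1},t_n)$ with $k_n = t_n - t_{n-1}$, let $\mathsf{A}:[0,T]\times\mathbb{R}^d \to \mathbb{R}^{d\times d}$ satisfy $\sup_{t}\|\mathsf{A}(t,u)x\| \le C_{\mathsf{A}}\|x\|$ for all $x \in \mathbb{R}^d$, and let $u \in \mathcal{P}^{r_n}(I_n;\mathbb{R}^d)$. If $k_n < (C_{\mathsf{A}} C_P)^{-1}$, where $C_P$ is the Poincaré constant, then the linear operator $\mathsf{G}^n_{\mathsf{A}}(\cdot,u): X_0^{r_n} \to \mathcal{P}^{r_n-1}(I_n;\mathbb{R}^d)'$ defined by $\langle \mathsf{G}^n_{\mathsf{A}}(t,u)x, \varphi\rangle = \int_{I_n}(\dot x,\varphi)\,dt - \int_{I_n}(\mathsf{A}(t,u(t))x(t),\varphi(t))\,dt$ has trivial kernel, i.e. it is injective on $X_0^{r_n} = \{x \in \mathcal{P}^{r_n}(I_n;\mathbb{R}^d): x(t_{n-1})=0\}$. -/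
open MeasureTheory Real
open scoped RealInnerProductSpace

abbrev E (d : ℕ) := EuclideanSpace ℝ (Fin d)

/-- The `L²` norm of a vector-valued function over the interval `(a,b)`. -/
noncomputable def L2norm {d : ℕ} (f : ℝ → E d) (a b : ℝ) : ℝ :=
  Real.sqrt (∫ t in a..b, ‖f t‖ ^ 2)

/-- `x : ℝ → ℝ^d` is (componentwise) a polynomial of degree at most `r`. -/
def IsPolyDeg {d : ℕ} (r : ℕ) (x : ℝ → E d) : Prop :=
  ∃ p : Fin d → Polynomial ℝ, (∀ i, (p i).natDegree ≤ r) ∧ ∀ t i, x t i = (p i).eval t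

lemma polyvec_hasDerivAt {d : ℕ} (p : Fin d → Polynomial ℝ) (x : ℝ → E d)
    (hx : ∀ t i, x t i = (p i).eval t) (t : ℝ) :
    HasDerivAt x ((EuclideanSpace.equiv (Fin d) ℝ).symm fun i => ((p i).derivative).eval t) t := by
  have hxe : x = fun s => (EuclideanSpace.equiv (Fin d) ℝ).symm fun i => (p i).eval s := by
    funext s; ext i; simp [hx s i]
  rw [hxe]
  have hg : HasDerivAt (fun s => fun i => (p i).eval s) (fun i => ((p i).derivative).eval t) t :=
    hasDerivAt_pi.2 fun i => (p i).hasDerivAt t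
  exact (((EuclideanSpace.equiv (Fin d) ℝ).symm :
    (Fin d → ℝ) →L[ℝ] E d).hasFDerivAt.comp_hasDerivAt t hg :)

lemma polyvec_continuous {d : ℕ} (p : Fin d → Polynomial ℝ) (x : ℝ → E d)
    (hx : ∀ t i, x t i = (p i).eval t) : Continuous x := by
  have hxe : x = fun s => (EuclideanSpace.equiv (Fin d) ℝ).symm fun i => (p i).eval s := by
    funext s; ext i; simp [hx s i]
  rw [hxe]
  exact ((EuclideanSpace.equiv (Fin d) ℝ).symm.continuous).comp
    (continuous_pi fun i => (p i).continuous)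

set_option maxHeartbeats 1000000 in
/-- Injectivity (trivial kernel) of the linearized operator `G_A` on
`X₀ = {x ∈ P^{rₙ} : x(tₙ₋₁) = 0}` under the time-step restriction `kₙ < (C_A C_P)⁻¹`. -/
theorem GA_injective {d : ℕ} (tp tn : ℝ) (htn : tp < tn) (rn : ℕ)
    (A : ℝ → E d → (E d →L[ℝ] E d))
    (C_A C_P : ℝ) (hCA : 0 ≤ C_A) (hCP : 0 < C_P)
    (hAbound : ∀ (t : ℝ) (v x : E d), ‖A t v x‖ ≤ C_A * ‖x‖)
    (hAcont : Continuous fun p : ℝ × E d => A p.1 p.2)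
    (u : ℝ → E d) (hu : IsPolyDeg rn u)
    (hPoincare : ∀ y : ℝ → E d, IsPolyDeg rn y → y tp = 0 →
      L2norm y tp tn ≤ (tn - tp) * C_P * L2norm (deriv y) tp tn)
    (hk : tn - tp < (C_A * C_P)⁻¹)
    (x : ℝ → E d) (hx : IsPolyDeg rn x) (hx0 : x tp = 0)
    (hker : ∀ φ : ℝ → E d, IsPolyDeg (rn - 1) φ →
      (∫ t in tp..tn, (⟪deriv x t, φ t⟫ - ⟪A t (u t) (x t), φ t⟫)) = 0) :
    ∀ t ∈ Set.Icc tp tn, x t = 0 := by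
  -- C_A must be positive, else the step condition contradicts tp < tn
  have hCA0 : 0 < C_A := by
    rcases lt_or_eq_of_le hCA with h | h
    · exact h
    · exfalso; rw [← h] at hk; simp at hk; linarith
  obtain ⟨p, hpdeg, hpx⟩ := hx
  obtain ⟨pu, hpudeg, hpu⟩ := hu
  set q : Fin d → Polynomial ℝ := fun i => (p i).derivative with hq
  set x' : ℝ → E d :=
    fun t => (EuclideanSpace.equiv (Fin d) ℝ).symm fun i => (q i).eval t with hx'
  have hd : ∀ t, HasDerivAt x (x' t) t := polyvec_hasDerivAt p x hpx
  have hderiv : deriv x = x' := funext fun t => (hd t).deriv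
  have hx'p : ∀ t i, x' t i = (q i).eval t := by intro t i; simp [hx']
  have hx'poly : IsPolyDeg (rn - 1) x' :=
    ⟨q, fun i => le_trans ((p i).natDegree_derivative_le) (Nat.sub_le_sub_right (hpdeg i) 1),
      hx'p⟩
  have hcx : Continuous x := polyvec_continuous p x hpx
  have hcx' : Continuous x' := polyvec_continuous q x' hx'p
  have hcu : Continuous u := polyvec_continuous pu u hpu
  have hcA : Continuous fun t => A t (u t) (x t) :=
    (hAcont.comp (continuous_id.prodMk hcu)).clm_apply hcx
  have hle : tp ≤ tn := le_of_lt htn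
  set D := ∫ t in tp..tn, ‖x' t‖ ^ 2 with hD
  set Sx := ∫ t in tp..tn, ‖x t‖ ^ 2 with hSx
  have hD0 : 0 ≤ D := intervalIntegral.integral_nonneg hle fun t _ => sq_nonneg _
  have hSx0 : 0 ≤ Sx := intervalIntegral.integral_nonneg hle fun t _ => sq_nonneg _
  set K := (tn - tp) * C_P with hK
  have hK0 : 0 < K := mul_pos (by linarith) hCP
  -- Poincaré, squared
  have hP : Sx ≤ K ^ 2 * D := by
    have h := hPoincare x ⟨p, hpdeg, hpx⟩ hx0
    rw [hderiv] at h
    unfold L2norm at h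
    have h2 : (Real.sqrt Sx) ^ 2 ≤ (K * Real.sqrt D) ^ 2 :=
      pow_le_pow_left₀ (Real.sqrt_nonneg _) h 2
    rw [Real.sq_sqrt hSx0] at h2
    calc Sx ≤ (K * Real.sqrt D) ^ 2 := h2
      _ = K ^ 2 * (Real.sqrt D) ^ 2 := by ring
      _ = K ^ 2 * D := by rw [Real.sq_sqrt hD0]
  -- the kernel identity with φ = x'
  have h0 := hker x' hx'poly
  rw [hderiv] at h0
  have hif : IntervalIntegrable (fun t => ⟪x' t, x' t⟫) volume tp tn :=
    (hcx'.inner hcx').intervalIntegrable tp tn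
  have hig : IntervalIntegrable (fun t => ⟪A t (u t) (x t), x' t⟫) volume tp tn :=
    (hcA.inner hcx').intervalIntegrable tp tn
  have hsplit : (∫ t in tp..tn, (⟪x' t, x' t⟫ - ⟪A t (u t) (x t), x' t⟫))
      = (∫ t in tp..tn, ⟪x' t, x' t⟫) - ∫ t in tp..tn, ⟪A t (u t) (x t), x' t⟫ :=
    intervalIntegral.integral_sub hif hig
  have hfD : (∫ t in tp..tn, ⟪x' t, x' t⟫) = D := by
    rw [hD]; congr 1; funext t; rw [real_inner_self_eq_norm_sq]
  have hDg : D = ∫ t in tp..tn, ⟪A t (u t) (x t), x' t⟫ := by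
    rw [hsplit, hfD] at h0; linarith
  -- pointwise bound and integral monotonicity
  have hmono : (∫ t in tp..tn, ⟪A t (u t) (x t), x' t⟫)
      ≤ ∫ t in tp..tn, (C_A / (2 * K) * ‖x t‖ ^ 2 + C_A * K / 2 * ‖x' t‖ ^ 2) := by
    apply intervalIntegral.integral_mono_on hle hig
    · exact ((continuous_const.mul (hcx.norm.pow 2)).add
        (continuous_const.mul (hcx'.norm.pow 2))).intervalIntegrable tp tn
    · intro t _
      have h1 : ⟪A t (u t) (x t), x' t⟫ ≤ ‖A t (u t) (x t)‖ * ‖x' t‖ := real_inner_le_norm _ _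
      have h2 : ‖A t (u t) (x t)‖ * ‖x' t‖ ≤ C_A * ‖x t‖ * ‖x' t‖ :=
        mul_le_mul_of_nonneg_right (hAbound t (u t) (x t)) (norm_nonneg _)
      set a := ‖x t‖ with ha
      set b := ‖x' t‖ with hb
      have key2 : 2 * K * (a * b) ≤ a ^ 2 + K ^ 2 * b ^ 2 := by
        nlinarith [sq_nonneg (a - K * b)]
      have heq : C_A / (2 * K) * a ^ 2 + C_A * K / 2 * b ^ 2 - C_A * (a * b)
          = (C_A / (2 * K)) * (a ^ 2 + K ^ 2 * b ^ 2 - 2 * K * (a * b)) := by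
        field_simp
      have hnn : 0 ≤ (C_A / (2 * K)) * (a ^ 2 + K ^ 2 * b ^ 2 - 2 * K * (a * b)) :=
        mul_nonneg (div_nonneg hCA (by linarith)) (by linarith)
      nlinarith [h1, h2, heq, hnn]
  have hrhs : (∫ t in tp..tn, (C_A / (2 * K) * ‖x t‖ ^ 2 + C_A * K / 2 * ‖x' t‖ ^ 2))
      = C_A / (2 * K) * Sx + C_A * K / 2 * D := by
    rw [intervalIntegral.integral_add (f := fun t => C_A / (2 * K) * ‖x t‖ ^ 2)
        (g := fun t => C_A * K / 2 * ‖x' t‖ ^ 2)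
        ((continuous_const.mul (hcx.norm.pow 2)).intervalIntegrable tp tn)
        ((continuous_const.mul (hcx'.norm.pow 2)).intervalIntegrable tp tn),
      intervalIntegral.integral_const_mul, intervalIntegral.integral_const_mul]
  -- conclude D = 0
  have hc1 : C_A * K < 1 := by
    have hpos : 0 < C_A * C_P := mul_pos hCA0 hCP
    have h := mul_lt_mul_of_pos_right hk hpos
    rw [inv_mul_cancel₀ (ne_of_gt hpos)] at h
    calc C_A * K = (tn - tp) * (C_A * C_P) := by rw [hK]; ring
      _ < 1 := h
  have hDK : D ≤ C_A * K * D := by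
    have h1 : D ≤ C_A / (2 * K) * Sx + C_A * K / 2 * D := by
      rw [hrhs] at hmono
      rw [← hDg] at hmono
      exact hmono
    have h2 : C_A / (2 * K) * Sx ≤ C_A / (2 * K) * (K ^ 2 * D) := by
      apply mul_le_mul_of_nonneg_left hP
      positivity
    have h3 : C_A / (2 * K) * (K ^ 2 * D) = C_A * K / 2 * D := by
      field_simp
    linarith
  have hDzero : D = 0 := by nlinarith
  -- D = 0 forces x' = 0 on (tp, tn)
  have hIoc : (∫ t in Set.Ioc tp tn, ‖x' t‖ ^ 2) = 0 := by
    rw [hD, intervalIntegral.integral_of_le hle] at hDzero; exact hDzero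
  have hint : Integrable (fun t => ‖x' t‖ ^ 2) (volume.restrict (Set.Ioc tp tn)) :=
    (hcx'.norm.pow 2).integrableOn_Ioc
  have hae : ∀ᵐ t ∂(volume.restrict (Set.Ioc tp tn)), ‖x' t‖ ^ 2 = 0 := by
    have := (integral_eq_zero_iff_of_nonneg (fun t => sq_nonneg _) hint).mp hIoc
    filter_upwards [this] with t ht using ht
  have hmeas : MeasurableSet {t : ℝ | ‖x' t‖ ^ 2 ≠ 0} :=
    (isOpen_compl_singleton.preimage (hcx'.norm.pow 2)).measurableSet
  have hnull : volume ({t : ℝ | ‖x' t‖ ^ 2 ≠ 0} ∩ Set.Ioc tp tn) = 0 := by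
    rw [ae_iff] at hae
    rwa [Measure.restrict_apply hmeas] at hae
  have hvol : volume (Set.Ioo tp tn ∩ {t : ℝ | ‖x' t‖ ^ 2 ≠ 0}) = 0 := by
    apply measure_mono_null _ hnull
    intro t ht
    exact ⟨ht.2, Set.Ioo_subset_Ioc_self ht.1⟩
  have hU : Set.Ioo tp tn ∩ {t : ℝ | ‖x' t‖ ^ 2 ≠ 0} = ∅ :=
    (isOpen_Ioo.inter
      (isOpen_compl_singleton.preimage (hcx'.norm.pow 2))).eq_empty_of_measure_zero hvol
  have hzero : ∀ t ∈ Set.Ioo tp tn, x' t = 0 := by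
    intro t ht
    by_contra hne
    have : t ∈ Set.Ioo tp tn ∩ {t : ℝ | ‖x' t‖ ^ 2 ≠ 0} :=
      ⟨ht, by simp [hne]⟩
    rw [hU] at this; exact this
  -- hence each derivative polynomial is zero
  have hq0 : ∀ i, q i = 0 := by
    intro i
    apply Polynomial.eq_zero_of_infinite_isRoot
    apply (Set.Ioo_infinite htn).mono
    intro t ht
    have h1 : x' t i = 0 := by rw [hzero t ht]; rfl
    rw [hx'p t i] at h1
    exact h1
  -- so x is constant, equal to x tp = 0
  intro s _
  ext i
  have hci : p i = Polynomial.C ((p i).coeff 0) :=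
    Polynomial.eq_C_of_derivative_eq_zero (hq0 i)
  have hxs : x s i = (p i).coeff 0 := by rw [hpx s i, hci]; simp
  have hxtp : x tp i = (p i).coeff 0 := by rw [hpx tp i, hci]; simp
  rw [hx0] at hxtp
  rw [hxs, ← hxtp]
end

section
/- Assume $\mathsf{F}:[0,T]\times\mathbb{R}^d\to\mathbb{R}^d$ is Lipschitz in the second variable with constant $L$, and $\mathsf{A}:[0,T]\times\mathbb{R}^d\to\mathbb{R}^{d\times d}$ satisfies the uniform bound $\|\mathsf{A}(t,u)x\|\le C_{\mathsf{A}}\|x\|$. Fix $u \in \mathcal{P}^{r_n}(I_n;\mathbb{R}^d)$ and suppose $k_n < (C_{\mathsf{A}} C_P)^{-1}$. Define $g: X_a^{r_n} \to X_a^{r_n}$ by $g(x) = x - [\mathsf{G}^n_{\mathsf{A}}(t,u)]^{-1}\mathsf{G}^n(t,x)$. Then for all $x,y \in X_a^{r_n}$: $\|g(x)-g(y)\|_{L^2(I_n;\mathbb{R}^d)} \le \frac{C_{\mathsf{A}}+L}{(k_n C_P)^{-1}-C_{\mathsf{A}}}\,\|x-y\|_{L^2(I_n;\mathbb{R}^d)}$.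 -/
open MeasureTheory Real
open scoped RealInnerProductSpace

lemma IsPolyDeg.core {d r : ℕ} {x : ℝ → E d} (h : IsPolyDeg r x) :
    ∃ x' : ℝ → E d, IsPolyDeg (r - 1) x' ∧ Continuous x ∧ Continuous x' ∧
      ∀ t, HasDerivAt x (x' t) t := by
  obtain ⟨p, hdeg, hev⟩ := h
  have hx : x = fun t => ((WithLp.equiv 2 _).symm (fun i => (p i).eval t) : E d) := by
    funext t; ext i; exact hev t i
  refine ⟨fun t => ((WithLp.equiv 2 _).symm (fun i => (p i).derivative.eval t) : E d),
    ⟨fun i => (p i).derivative, fun i => le_trans ((p i).natDegree_derivative_le)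
      (Nat.sub_le_sub_right (hdeg i) 1), fun t i => rfl⟩, ?_, ?_, ?_⟩
  · rw [hx]
    exact (PiLp.continuousLinearEquiv 2 ℝ (fun _ : Fin d => ℝ)).symm.continuous.comp
      (continuous_pi fun i => (p i).continuous_aeval)
  · exact (PiLp.continuousLinearEquiv 2 ℝ (fun _ : Fin d => ℝ)).symm.continuous.comp
      (continuous_pi fun i => (p i).derivative.continuous_aeval)
  · intro t
    rw [hx]
    have hq : HasDerivAt (fun t => (fun i => (p i).eval t : Fin d → ℝ))
        (fun i => (p i).derivative.eval t) t :=
      hasDerivAt_pi.2 fun i => (p i).hasDerivAt t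
    exact ((PiLp.continuousLinearEquiv 2 ℝ (fun _ : Fin d => ℝ)).symm.hasFDerivAt.comp_hasDerivAt t hq :)

lemma IsPolyDeg.continuous {d r : ℕ} {x : ℝ → E d} (h : IsPolyDeg r x) : Continuous x :=
  h.core.choose_spec.2.1

lemma IsPolyDeg.hasDerivAt {d r : ℕ} {x : ℝ → E d} (h : IsPolyDeg r x) (t : ℝ) :
    HasDerivAt x (deriv x t) t := by
  obtain ⟨x', _, _, _, hd⟩ := h.core
  have : deriv x t = x' t := (hd t).deriv
  rw [this]; exact hd t

lemma IsPolyDeg.derivPoly {d r : ℕ} {x : ℝ → E d} (h : IsPolyDeg r x) :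
    IsPolyDeg (r - 1) (deriv x) := by
  obtain ⟨x', h1, _, _, hd⟩ := h.core
  have hh : deriv x = x' := funext fun t => (hd t).deriv
  rw [hh]; exact h1

lemma IsPolyDeg.continuous_deriv {d r : ℕ} {x : ℝ → E d} (h : IsPolyDeg r x) :
    Continuous (deriv x) := by
  obtain ⟨x', _, _, hc, hd⟩ := h.core
  have : deriv x = x' := funext fun t => (hd t).deriv
  rw [this]; exact hc

lemma IsPolyDeg.sub {d r : ℕ} {x y : ℝ → E d} (hx : IsPolyDeg r x) (hy : IsPolyDeg r y) :
    IsPolyDeg r (fun t => x t - y t) := by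
  obtain ⟨p, hp, hpe⟩ := hx; obtain ⟨q, hq, hqe⟩ := hy
  refine ⟨fun i => p i - q i, fun i => le_trans (Polynomial.natDegree_sub_le _ _)
    (max_le (hp i) (hq i)), fun t i => ?_⟩
  simp [Polynomial.eval_sub, ← hpe, ← hqe]

-- Cauchy-Schwarz for interval integrals
lemma integral_CS (tp tn : ℝ) (hab : tp ≤ tn) (f g : ℝ → ℝ) (hf : Continuous f)
    (hg : Continuous g) (hf0 : ∀ t, 0 ≤ f t) (hg0 : ∀ t, 0 ≤ g t) :
    ∫ t in tp..tn, f t * g t ≤ sqrt (∫ t in tp..tn, f t ^ 2) * sqrt (∫ t in tp..tn, g t ^ 2) := by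
  set a := ∫ t in tp..tn, f t ^ 2 with ha
  set b := ∫ t in tp..tn, f t * g t with hb
  set c := ∫ t in tp..tn, g t ^ 2 with hc
  have key : ∀ s : ℝ, 0 ≤ a * (s * s) + (2 * b) * s + c := by
    intro s
    have h1 : ∀ t, (s * f t + g t) ^ 2 = s * s * f t ^ 2 + 2 * (f t * g t) * s + g t ^ 2 := by
      intro t; ring
    have h2 : (0:ℝ) ≤ ∫ t in tp..tn, (s * f t + g t) ^ 2 :=
      intervalIntegral.integral_nonneg hab (fun t _ => sq_nonneg _)
    have h3 : (∫ t in tp..tn, (s * f t + g t) ^ 2)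
        = a * (s * s) + (2 * b) * s + c := by
      rw [ha, hb, hc]
      have iA : IntervalIntegrable (fun t => (s*s) * f t ^ 2) volume tp tn :=
        (continuous_const.mul (hf.pow 2)).intervalIntegrable _ _
      have iB : IntervalIntegrable (fun t => (2*s) * (f t * g t)) volume tp tn :=
        (continuous_const.mul (hf.mul hg)).intervalIntegrable _ _
      have iC : IntervalIntegrable (fun t => g t ^ 2) volume tp tn :=
        (hg.pow 2).intervalIntegrable _ _
      rw [show (fun t => (s * f t + g t) ^ 2)
          = fun t => (s*s) * f t ^ 2 + (2*s) * (f t * g t) + g t ^ 2 from funext fun t => by ring]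
      rw [intervalIntegral.integral_add (iA.add iB) iC,
        intervalIntegral.integral_add iA iB,
        intervalIntegral.integral_const_mul, intervalIntegral.integral_const_mul]
      ring
    rw [← h3]; exact h2
  have hd := discrim_le_zero key
  rw [discrim] at hd
  have hb2 : b ^ 2 ≤ a * c := by nlinarith
  have hbnn : 0 ≤ b := intervalIntegral.integral_nonneg hab
    (fun t _ => mul_nonneg (hf0 t) (hg0 t))
  have hann : 0 ≤ a := intervalIntegral.integral_nonneg hab (fun t _ => sq_nonneg _)
  calc b = sqrt (b ^ 2) := (sqrt_sq hbnn).symm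
    _ ≤ sqrt (a * c) := Real.sqrt_le_sqrt hb2
    _ = sqrt a * sqrt c := Real.sqrt_mul hann c

set_option maxHeartbeats 4000000 in
/-- Lipschitz estimate for the linearized fixed point map
`g(x) = x - [Gₐ(t,u)]⁻¹ G(t,x)` on `X_a = {x ∈ P^{rₙ} : x(tₙ₋₁) = a}`:
`‖g(x)-g(y)‖ ≤ (C_A + L)/((kₙ C_P)⁻¹ - C_A) ‖x-y‖` in `L²(Iₙ)`.
The map `g` is characterized by its defining relation `-⟨Gₐ(t,u)(g(x)-x), φ⟩ = ⟨G(t,x), φ⟩`. -/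
theorem g_lipschitz {d : ℕ} (tp tn : ℝ) (htn : tp < tn) (rn : ℕ)
    (F : ℝ → E d → E d) (L : ℝ) (hL : 0 ≤ L)
    (hFcont : Continuous fun p : ℝ × E d => F p.1 p.2)
    (hFlip : ∀ (t : ℝ) (v w : E d), ‖F t v - F t w‖ ≤ L * ‖v - w‖)
    (A : ℝ → E d → (E d →L[ℝ] E d)) (C_A : ℝ) (hCA : 0 ≤ C_A)
    (hAbound : ∀ (t : ℝ) (v x : E d), ‖A t v x‖ ≤ C_A * ‖x‖)
    (hAcont : Continuous fun p : ℝ × E d => A p.1 p.2)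
    (C_P : ℝ) (hCP : 0 < C_P)
    (hPoincare : ∀ y : ℝ → E d, IsPolyDeg rn y → y tp = 0 →
      L2norm y tp tn ≤ (tn - tp) * C_P * L2norm (deriv y) tp tn)
    (hk : tn - tp < (C_A * C_P)⁻¹)
    (u : ℝ → E d) (hu : IsPolyDeg rn u) (a : E d)
    (g : (ℝ → E d) → (ℝ → E d))
    (hg : ∀ x : ℝ → E d, IsPolyDeg rn x → x tp = a →
      IsPolyDeg rn (g x) ∧ g x tp = a ∧
      ∀ φ : ℝ → E d, IsPolyDeg (rn - 1) φ →
        (-(∫ t in tp..tn, (⟪deriv (g x) t - deriv x t, φ t⟫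
              - ⟪A t (u t) (g x t - x t), φ t⟫))
          = ∫ t in tp..tn, (⟪deriv x t, φ t⟫ - ⟪F t (x t), φ t⟫))) :
    ∀ x y : ℝ → E d, IsPolyDeg rn x → x tp = a → IsPolyDeg rn y → y tp = a →
      L2norm (fun t => g x t - g y t) tp tn
        ≤ ((C_A + L) / (((tn - tp) * C_P)⁻¹ - C_A)) * L2norm (fun t => x t - y t) tp tn := by
  intro x y hx hxa hy hya
  obtain ⟨hgx, hgxa, hEx⟩ := hg x hx hxa
  obtain ⟨hgy, hgya, hEy⟩ := hg y hy hya
  have hab : tp ≤ tn := le_of_lt htn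
  set e : ℝ → E d := fun t => g x t - g y t with he
  set z : ℝ → E d := fun t => x t - y t with hz
  have hepoly : IsPolyDeg rn e := hgx.sub hgy
  have hzpoly : IsPolyDeg rn z := hx.sub hy
  have he0 : e tp = 0 := by simp [he, hgxa, hgya]
  set φ : ℝ → E d := deriv e with hφdef
  have hφp : IsPolyDeg (rn - 1) φ := hepoly.derivPoly
  -- continuity facts
  have cgx : Continuous (g x) := hgx.continuous
  have cgy : Continuous (g y) := hgy.continuous
  have cx : Continuous x := hx.continuous
  have cy : Continuous y := hy.continuous
  have cu : Continuous u := hu.continuous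
  have cdgx : Continuous (deriv (g x)) := hgx.continuous_deriv
  have cdgy : Continuous (deriv (g y)) := hgy.continuous_deriv
  have cdx : Continuous (deriv x) := hx.continuous_deriv
  have cdy : Continuous (deriv y) := hy.continuous_deriv
  have cφ : Continuous φ := hepoly.continuous_deriv
  have ce : Continuous e := hepoly.continuous
  have cz : Continuous z := hzpoly.continuous
  have cAu : Continuous fun t => A t (u t) :=
    hAcont.comp (continuous_id.prodMk cu)
  have cA : ∀ (v : ℝ → E d), Continuous v → Continuous fun t => A t (u t) (v t) :=
    fun v cv => cAu.clm_apply cv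
  have cF : ∀ (v : ℝ → E d), Continuous v → Continuous fun t => F t (v t) :=
    fun v cv => hFcont.comp (continuous_id.prodMk cv)
  set w : ℝ → E d := fun t =>
    A t (u t) (e t) - A t (u t) (z t) + (F t (x t) - F t (y t)) with hwdef
  have cw : Continuous w := (((cA e ce).sub (cA z cz)).add ((cF x cx).sub (cF y cy)))
  -- the two weak identities combined
  have hEx' := hEx φ hφp
  have hEy' := hEy φ hφp
  -- integrability
  have iPx : IntervalIntegrable (fun t => ⟪deriv (g x) t - deriv x t, φ t⟫
      - ⟪A t (u t) (g x t - x t), φ t⟫) volume tp tn :=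
    (((cdgx.sub cdx).inner cφ).sub ((cA _ (cgx.sub cx)).inner cφ)).intervalIntegrable _ _
  have iQx : IntervalIntegrable (fun t => ⟪deriv x t, φ t⟫ - ⟪F t (x t), φ t⟫) volume tp tn :=
    ((cdx.inner cφ).sub ((cF x cx).inner cφ)).intervalIntegrable _ _
  have iPy : IntervalIntegrable (fun t => ⟪deriv (g y) t - deriv y t, φ t⟫
      - ⟪A t (u t) (g y t - y t), φ t⟫) volume tp tn :=
    (((cdgy.sub cdy).inner cφ).sub ((cA _ (cgy.sub cy)).inner cφ)).intervalIntegrable _ _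
  have iQy : IntervalIntegrable (fun t => ⟪deriv y t, φ t⟫ - ⟪F t (y t), φ t⟫) volume tp tn :=
    ((cdy.inner cφ).sub ((cF y cy).inner cφ)).intervalIntegrable _ _
  have iφsq : IntervalIntegrable (fun t => ‖φ t‖ ^ 2) volume tp tn :=
    (cφ.norm.pow 2).intervalIntegrable _ _
  have iwφ : IntervalIntegrable (fun t => ⟪w t, φ t⟫) volume tp tn :=
    (cw.inner cφ).intervalIntegrable _ _
  have hx0 : (∫ t in tp..tn, ((⟪deriv (g x) t - deriv x t, φ t⟫
      - ⟪A t (u t) (g x t - x t), φ t⟫)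
      + (⟪deriv x t, φ t⟫ - ⟪F t (x t), φ t⟫))) = 0 := by
    rw [intervalIntegral.integral_add iPx iQx, ← hEx']; ring
  have hy0 : (∫ t in tp..tn, ((⟪deriv (g y) t - deriv y t, φ t⟫
      - ⟪A t (u t) (g y t - y t), φ t⟫)
      + (⟪deriv y t, φ t⟫ - ⟪F t (y t), φ t⟫))) = 0 := by
    rw [intervalIntegral.integral_add iPy iQy, ← hEy']; ring
  have hsub : (∫ t in tp..tn,
      (((⟪deriv (g x) t - deriv x t, φ t⟫ - ⟪A t (u t) (g x t - x t), φ t⟫)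
        + (⟪deriv x t, φ t⟫ - ⟪F t (x t), φ t⟫))
      - ((⟪deriv (g y) t - deriv y t, φ t⟫ - ⟪A t (u t) (g y t - y t), φ t⟫)
        + (⟪deriv y t, φ t⟫ - ⟪F t (y t), φ t⟫)))) = 0 := by
    rw [intervalIntegral.integral_sub (iPx.add iQx) (iPy.add iQy), hx0, hy0]; ring
  have hptwise : (fun t => ‖φ t‖ ^ 2 - ⟪w t, φ t⟫)
      = fun t => (((⟪deriv (g x) t - deriv x t, φ t⟫ - ⟪A t (u t) (g x t - x t), φ t⟫)
        + (⟪deriv x t, φ t⟫ - ⟪F t (x t), φ t⟫))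
      - ((⟪deriv (g y) t - deriv y t, φ t⟫ - ⟪A t (u t) (g y t - y t), φ t⟫)
        + (⟪deriv y t, φ t⟫ - ⟪F t (y t), φ t⟫))) := by
    funext t
    have hφt : φ t = deriv (g x) t - deriv (g y) t := by
      rw [hφdef]
      exact (((hgx.hasDerivAt t).sub (hgy.hasDerivAt t)).deriv :)
    simp only [hwdef, he, hz]
    rw [hφt, ← real_inner_self_eq_norm_sq]
    simp only [map_sub, inner_sub_left, inner_sub_right, inner_add_left]
    ring
  have key : (∫ t in tp..tn, ‖φ t‖ ^ 2) = ∫ t in tp..tn, ⟪w t, φ t⟫ := by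
    have h0 : (∫ t in tp..tn, (‖φ t‖ ^ 2 - ⟪w t, φ t⟫)) = 0 := by rw [hptwise]; exact hsub
    rw [intervalIntegral.integral_sub iφsq iwφ] at h0
    linarith
  -- the quantitative estimate
  have hestm : ∀ t ∈ Set.Icc tp tn, ⟪w t, φ t⟫
      ≤ C_A * (‖e t‖ * ‖φ t‖) + (C_A + L) * (‖z t‖ * ‖φ t‖) := by
    intro t _
    have h1 : ⟪w t, φ t⟫ ≤ ‖w t‖ * ‖φ t‖ := real_inner_le_norm _ _
    have hA1 := hAbound t (u t) (e t)
    have hA2 := hAbound t (u t) (z t)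
    have hF := hFlip t (x t) (y t)
    have hzt : x t - y t = z t := rfl
    rw [hzt] at hF
    have tri : ‖w t‖ ≤ ‖A t (u t) (e t)‖ + ‖A t (u t) (z t)‖ + ‖F t (x t) - F t (y t)‖ := by
      simp only [hwdef]
      refine le_trans (norm_add_le _ _) ?_
      have := norm_sub_le (A t (u t) (e t)) (A t (u t) (z t))
      simp only [he, hz] at this ⊢
      linarith
    have h2 : ‖w t‖ ≤ C_A * ‖e t‖ + (C_A + L) * ‖z t‖ := by linarith [tri, hA1, hA2, hF]
    have h3 := mul_le_mul_of_nonneg_right h2 (norm_nonneg (φ t))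
    nlinarith [h3, h1]
  have iR : IntervalIntegrable
      (fun t => C_A * (‖e t‖ * ‖φ t‖) + (C_A + L) * (‖z t‖ * ‖φ t‖)) volume tp tn :=
    ((continuous_const.mul (ce.norm.mul cφ.norm)).add
      (continuous_const.mul (cz.norm.mul cφ.norm))).intervalIntegrable _ _
  have hstep1 : (∫ t in tp..tn, ⟪w t, φ t⟫)
      ≤ ∫ t in tp..tn, (C_A * (‖e t‖ * ‖φ t‖) + (C_A + L) * (‖z t‖ * ‖φ t‖)) :=
    intervalIntegral.integral_mono_on hab iwφ iR hestm
  have hsplit : (∫ t in tp..tn, (C_A * (‖e t‖ * ‖φ t‖) + (C_A + L) * (‖z t‖ * ‖φ t‖)))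
      = C_A * (∫ t in tp..tn, ‖e t‖ * ‖φ t‖) + (C_A + L) * (∫ t in tp..tn, ‖z t‖ * ‖φ t‖) := by
    rw [intervalIntegral.integral_add (f := fun t => C_A * (‖e t‖ * ‖φ t‖))
        (g := fun t => (C_A + L) * (‖z t‖ * ‖φ t‖))
        ((continuous_const.mul (ce.norm.mul cφ.norm)).intervalIntegrable _ _)
        ((continuous_const.mul (cz.norm.mul cφ.norm)).intervalIntegrable _ _),
      intervalIntegral.integral_const_mul, intervalIntegral.integral_const_mul]
  have hCS1 : (∫ t in tp..tn, ‖e t‖ * ‖φ t‖) ≤ L2norm e tp tn * L2norm φ tp tn := by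
    have := integral_CS tp tn hab (fun t => ‖e t‖) (fun t => ‖φ t‖) ce.norm cφ.norm
      (fun t => norm_nonneg _) (fun t => norm_nonneg _)
    simpa [L2norm] using this
  have hCS2 : (∫ t in tp..tn, ‖z t‖ * ‖φ t‖) ≤ L2norm z tp tn * L2norm φ tp tn := by
    have := integral_CS tp tn hab (fun t => ‖z t‖) (fun t => ‖φ t‖) cz.norm cφ.norm
      (fun t => norm_nonneg _) (fun t => norm_nonneg _)
    simpa [L2norm] using this
  have hNφsq : L2norm φ tp tn ^ 2 = ∫ t in tp..tn, ‖φ t‖ ^ 2 :=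
    Real.sq_sqrt (intervalIntegral.integral_nonneg hab (fun t _ => sq_nonneg _))
  have hNφ0 : 0 ≤ L2norm φ tp tn := Real.sqrt_nonneg _
  have hNe0 : 0 ≤ L2norm e tp tn := Real.sqrt_nonneg _
  have hNz0 : 0 ≤ L2norm z tp tn := Real.sqrt_nonneg _
  have hmain : L2norm φ tp tn ^ 2
      ≤ C_A * (L2norm e tp tn * L2norm φ tp tn)
        + (C_A + L) * (L2norm z tp tn * L2norm φ tp tn) := by
    rw [hNφsq, key]
    refine le_trans (le_trans hstep1 (le_of_eq hsplit)) ?_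
    have g1 := mul_le_mul_of_nonneg_left hCS1 hCA
    have g2 := mul_le_mul_of_nonneg_left hCS2 (by linarith : (0:ℝ) ≤ C_A + L)
    linarith
  have hP : L2norm e tp tn ≤ (tn - tp) * C_P * L2norm φ tp tn := by
    have := hPoincare e hepoly he0
    rwa [← hφdef] at this
  -- arithmetic conclusion
  have hkpos : 0 < tn - tp := by linarith
  have hCA0 : 0 < C_A := by
    rcases hCA.eq_or_lt with h | h
    · rw [← h] at hk; simp at hk; linarith
    · exact h
  have hkCP : 0 < (tn - tp) * C_P := mul_pos hkpos hCP
  have hsmall : C_A * ((tn - tp) * C_P) < 1 := by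
    have h1 : (C_A * C_P) * (tn - tp) < (C_A * C_P) * (C_A * C_P)⁻¹ :=
      mul_lt_mul_of_pos_left hk (mul_pos hCA0 hCP)
    rw [mul_inv_cancel₀ (ne_of_gt (mul_pos hCA0 hCP))] at h1
    nlinarith
  have hfrac : ((tn - tp) * C_P)⁻¹ - C_A
      = (1 - C_A * ((tn - tp) * C_P)) / ((tn - tp) * C_P) := by
    field_simp
  rcases hNφ0.eq_or_lt with h | hNφpos
  · have hNe : L2norm e tp tn ≤ 0 := by rw [← h] at hP; linarith [hP]
    have hc : 0 ≤ (C_A + L) / (((tn - tp) * C_P)⁻¹ - C_A) := by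
      apply div_nonneg (by linarith)
      rw [hfrac]
      exact le_of_lt (div_pos (by linarith) hkCP)
    calc L2norm e tp tn ≤ 0 := hNe
      _ ≤ ((C_A + L) / (((tn - tp) * C_P)⁻¹ - C_A)) * L2norm z tp tn :=
        mul_nonneg hc hNz0
  · have h4 : L2norm φ tp tn ≤ C_A * L2norm e tp tn + (C_A + L) * L2norm z tp tn := by
      nlinarith [hmain]
    have h5 : (1 - C_A * ((tn - tp) * C_P)) * L2norm φ tp tn
        ≤ (C_A + L) * L2norm z tp tn := by
      nlinarith [mul_le_mul_of_nonneg_left hP hCA, h4]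
    rw [hfrac, div_div_eq_mul_div, div_mul_eq_mul_div,
      le_div_iff₀ (by linarith : (0:ℝ) < 1 - C_A * ((tn - tp) * C_P))]
    nlinarith [mul_le_mul_of_nonneg_left h5 hkCP.le,
      mul_le_mul_of_nonneg_right hP (by linarith : (0:ℝ) ≤ 1 - C_A * ((tn - tp) * C_P))]
end

section
/- Suppose $\mathsf{F}:[0,T]\times\mathbb{R}^d\to\mathbb{R}^d$ is Lipschitz continuous in the second variable with constant $L$, and $\mathsf{A}$ satisfies the uniform bound $\|\mathsf{A}(t,u)x\|\le C_{\mathsf{A}}\|x\|$. If the maximal time step satisfies $k < \frac{1}{(2C_{\mathsf{A}}+L)C_P}$, then the continuous Galerkin time-stepping scheme admits a unique solution $\mathcal{U}\in\mathcal{S}^{\mathbf{r},1}(\tau_N;\mathbb{R}^d)$, i.e., on each subinterval $I_n$ there exists a unique $\mathcal{U}\in X_a^{r_n}$ (with $a=\mathcal{U}(t_{n-1})$, $\mathcal{U}(0)=u_0$) satisfying $\int_{I_n}(\dot{\mathcal{U}},\varphi)\,dt = \int_{I_n}(\mathsf{F}(t,\mathcal{U}(t)),\varphi(t))\,dt$ for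 all $\varphi\in\mathcal{P}^{r_n-1}(I_n;\mathbb{R}^d)$. -/
open MeasureTheory Real
open scoped RealInnerProductSpace

namespace CGAux
variable {d : ℕ}

noncomputable def pfun (r : ℕ) (c : Fin r → E d) : ℝ → E d :=
  fun s => ∑ j : Fin r, (s ^ (j : ℕ)) • c j

noncomputable def afun (r : ℕ) (a : ℝ) (ua : E d) (c : Fin r → E d) : ℝ → E d :=
  fun s => ua + ∑ j : Fin r, ((s ^ ((j : ℕ) + 1) - a ^ ((j : ℕ) + 1)) / ((j : ℕ) + 1)) • c j

lemma sum_apply {ι : Type*} (s : Finset ι) (f : ι → E d) (i : Fin d) :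
    (∑ j ∈ s, f j) i = ∑ j ∈ s, f j i := by
  rw [WithLp.ofLp_sum, Finset.sum_apply]

lemma smul_apply (x : ℝ) (v : E d) (i : Fin d) : (x • v) i = x * v i := rfl
lemma add_apply (v w : E d) (i : Fin d) : (v + w) i = v i + w i := rfl
lemma sub_apply (v w : E d) (i : Fin d) : (v - w) i = v i - w i := rfl
lemma zero_apply (i : Fin d) : (0 : E d) i = 0 := rfl
lemma ext_ed {v w : E d} (h : ∀ i, v i = w i) : v = w := PiLp.ext h

lemma pfun_continuous (r : ℕ) (c : Fin r → E d) : Continuous (pfun r c) := by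
  unfold pfun
  exact continuous_finset_sum _ fun j _ => (continuous_pow _).smul continuous_const

lemma afun_continuous (r : ℕ) (a : ℝ) (ua : E d) (c : Fin r → E d) :
    Continuous (afun r a ua c) := by
  unfold afun
  exact continuous_const.add <| continuous_finset_sum _ fun j _ =>
    (((continuous_pow _).sub continuous_const).div_const _).smul continuous_const

lemma afun_left (r : ℕ) (a : ℝ) (ua : E d) (c : Fin r → E d) : afun r a ua c a = ua := by
  simp [afun]

lemma hasDerivAt_afun (r : ℕ) (a : ℝ) (ua : E d) (c : Fin r → E d) (s : ℝ) :
    HasDerivAt (afun r a ua c) (pfun r c s) s := by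
  unfold afun pfun
  have h : ∀ j : Fin r, HasDerivAt
      (fun t : ℝ => ((t ^ ((j : ℕ) + 1) - a ^ ((j : ℕ) + 1)) / ((j : ℕ) + 1)) • c j)
      ((s ^ (j : ℕ)) • c j) s := by
    intro j
    have h1 : HasDerivAt (fun t : ℝ => (t ^ ((j : ℕ) + 1) - a ^ ((j : ℕ) + 1)) / ((j : ℕ) + 1))
        ((((j : ℕ) + 1 : ℕ) * s ^ (j : ℕ)) / ((j : ℕ) + 1)) s :=
      ((hasDerivAt_pow ((j : ℕ) + 1) s).sub_const _).div_const _
    have h2 := h1.smul_const (c j)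
    have hne : ((j : ℕ) : ℝ) + 1 ≠ 0 := by positivity
    have h3 : ((((j : ℕ) + 1 : ℕ) : ℝ) * s ^ (j : ℕ)) / ((j : ℕ) + 1) = s ^ (j : ℕ) := by
      push_cast; field_simp
    rw [h3] at h2
    exact h2
  have hsum : HasDerivAt
      (fun t : ℝ => ∑ j : Fin r, ((t ^ ((j : ℕ) + 1) - a ^ ((j : ℕ) + 1)) / ((j : ℕ) + 1)) • c j)
      (∑ j : Fin r, (s ^ (j : ℕ)) • c j) s := HasDerivAt.fun_sum fun j _ => h j
  exact hsum.const_add ua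

lemma deriv_afun (r : ℕ) (a : ℝ) (ua : E d) (c : Fin r → E d) :
    deriv (afun r a ua c) = pfun r c :=
  funext fun s => (hasDerivAt_afun r a ua c s).deriv

lemma afun_sub (r : ℕ) (a : ℝ) (ua : E d) (c c' : Fin r → E d) (s : ℝ) :
    afun r a ua c s - afun r a ua c' s = afun r a 0 (c - c') s := by
  simp [afun, smul_sub, Finset.sum_sub_distrib]

lemma pfun_add (r : ℕ) (c c' : Fin r → E d) : pfun r (c + c') = pfun r c + pfun r c' := by
  funext s
  simp [pfun, smul_add, Finset.sum_add_distrib]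

lemma pfun_smul (r : ℕ) (x : ℝ) (c : Fin r → E d) : pfun r (x • c) = x • pfun r c := by
  funext s
  simp [pfun, Finset.smul_sum, smul_smul, mul_comm]

lemma isPolyDeg_afun (r : ℕ) (a : ℝ) (ua : E d) (c : Fin r → E d) :
    IsPolyDeg r (afun r a ua c) := by
  classical
  refine ⟨fun i => Polynomial.C (ua i) + ∑ j : Fin r,
    Polynomial.C (c j i * (((j : ℕ) : ℝ) + 1)⁻¹) *
      (Polynomial.X ^ ((j : ℕ) + 1) - Polynomial.C (a ^ ((j : ℕ) + 1))), ?_, ?_⟩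
  · intro i
    refine le_trans (Polynomial.natDegree_add_le _ _) ?_
    simp only [Polynomial.natDegree_C, max_le_iff]
    refine ⟨Nat.zero_le _, Polynomial.natDegree_sum_le_of_forall_le _ _ fun j _ => ?_⟩
    refine le_trans (Polynomial.natDegree_mul_le) ?_
    simp only [Polynomial.natDegree_C, zero_add]
    have h1 : (Polynomial.X ^ ((j : ℕ) + 1) - Polynomial.C (a ^ ((j : ℕ) + 1)) :
        Polynomial ℝ).natDegree ≤ (j : ℕ) + 1 := by
      refine le_trans (Polynomial.natDegree_sub_le _ _) ?_
      rw [Polynomial.natDegree_X_pow, Polynomial.natDegree_C]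
      omega
    exact le_trans h1 (by have := j.isLt; omega)
  · intro t i
    simp only [afun, add_apply, sum_apply, smul_apply, Polynomial.eval_add, Polynomial.eval_C,
      Polynomial.eval_finset_sum, Polynomial.eval_mul, Polynomial.eval_sub, Polynomial.eval_pow,
      Polynomial.eval_X]
    congr 1
    refine Finset.sum_congr rfl fun j _ => ?_
    have hne : ((j : ℕ) : ℝ) + 1 ≠ 0 := by positivity
    field_simp

lemma isPolyDeg_pfun (r : ℕ) (hr : 1 ≤ r) (c : Fin r → E d) :
    IsPolyDeg (r - 1) (pfun r c) := by
  classical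
  refine ⟨fun i => ∑ j : Fin r, Polynomial.C (c j i) * Polynomial.X ^ (j : ℕ), ?_, ?_⟩
  · intro i
    refine Polynomial.natDegree_sum_le_of_forall_le _ _ fun j _ => ?_
    refine le_trans (Polynomial.natDegree_mul_le) ?_
    rw [Polynomial.natDegree_C, Polynomial.natDegree_X_pow]
    have := j.isLt; omega
  · intro t i
    simp only [pfun, sum_apply, smul_apply, Polynomial.eval_finset_sum, Polynomial.eval_mul,
      Polynomial.eval_C, Polynomial.eval_pow, Polynomial.eval_X]
    exact Finset.sum_congr rfl fun j _ => mul_comm _ _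

lemma exists_pfun_of_isPolyDeg (r : ℕ) (hr : 1 ≤ r) (φ : ℝ → E d)
    (hφ : IsPolyDeg (r - 1) φ) : ∃ c : Fin r → E d, ∀ s, φ s = pfun r c s := by
  obtain ⟨p, hdeg, hval⟩ := hφ
  refine ⟨fun j => WithLp.toLp 2 (fun i => (p i).coeff (j : ℕ)), fun s => ext_ed fun i => ?_⟩
  rw [hval s i, pfun, sum_apply]
  simp only [smul_apply]
  rw [Polynomial.eval_eq_sum_range' (n := r) (by have := hdeg i; omega : (p i).natDegree < r)]
  rw [← Fin.sum_univ_eq_sum_range (fun j => (p i).coeff j * s ^ j) r]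
  exact Finset.sum_congr rfl fun j _ => mul_comm _ _

end CGAux

section L2
open MeasureTheory Real
open scoped RealInnerProductSpace
namespace CGAux
variable {d : ℕ} {a b : ℝ}

lemma mem2 {f : ℝ → E d} (hf : Continuous f) :
    MemLp f 2 (volume.restrict (Set.Ioc a b)) := by
  obtain ⟨C, hC⟩ := (isCompact_Icc (a := a) (b := b)).exists_bound_of_continuousOn hf.continuousOn
  exact MemLp.of_bound hf.aestronglyMeasurable C
    ((ae_restrict_iff' measurableSet_Ioc).2 (Filter.Eventually.of_forall
      fun x hx => hC x (Set.Ioc_subset_Icc_self hx)))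

lemma norm_toLp_eq (hab : a ≤ b) {f : ℝ → E d}
    (hf : MemLp f 2 (volume.restrict (Set.Ioc a b))) :
    ‖hf.toLp f‖ = L2norm f a b := by
  rw [Lp.norm_toLp, hf.eLpNorm_eq_integral_rpow_norm two_ne_zero ENNReal.ofNat_ne_top]
  have h2 : (2 : ENNReal).toReal = (2 : ℝ) := by simp
  rw [ENNReal.toReal_ofReal (Real.rpow_nonneg
    (integral_nonneg fun x => Real.rpow_nonneg (norm_nonneg _) _) _)]
  rw [L2norm, Real.sqrt_eq_rpow, intervalIntegral.integral_of_le hab]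
  rw [h2]
  norm_num

lemma inner_toLp_eq (hab : a ≤ b) {f g : ℝ → E d}
    (hf : MemLp f 2 (volume.restrict (Set.Ioc a b)))
    (hg : MemLp g 2 (volume.restrict (Set.Ioc a b))) :
    ⟪hf.toLp f, hg.toLp g⟫ = ∫ s in a..b, ⟪f s, g s⟫ := by
  rw [L2.inner_def, intervalIntegral.integral_of_le hab]
  refine integral_congr_ae ?_
  filter_upwards [hf.coeFn_toLp, hg.coeFn_toLp] with x h1 h2
  rw [h1, h2]

lemma integral_inner_le (hab : a ≤ b) {f g : ℝ → E d} (hf : Continuous f) (hg : Continuous g) :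
    ∫ s in a..b, ⟪f s, g s⟫ ≤ L2norm f a b * L2norm g a b := by
  rw [← inner_toLp_eq hab (mem2 hf) (mem2 hg), ← norm_toLp_eq hab (mem2 hf),
    ← norm_toLp_eq hab (mem2 hg)]
  exact real_inner_le_norm _ _

lemma L2norm_nonneg (f : ℝ → E d) : 0 ≤ L2norm f a b := Real.sqrt_nonneg _

lemma L2norm_le_mul (hab : a ≤ b) {f w : ℝ → E d} (hf : Continuous f) (hw : Continuous w)
    {L : ℝ} (hL : 0 ≤ L) (h : ∀ s, ‖f s‖ ≤ L * ‖w s‖) :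
    L2norm f a b ≤ L * L2norm w a b := by
  have h1 : (∫ t in a..b, ‖f t‖ ^ 2) ≤ ∫ t in a..b, L ^ 2 * ‖w t‖ ^ 2 := by
    refine intervalIntegral.integral_mono_on hab ((hf.norm.pow 2).intervalIntegrable _ _)
      ((continuous_const.mul (hw.norm.pow 2)).intervalIntegrable _ _) fun x _ => ?_
    calc ‖f x‖ ^ 2 ≤ (L * ‖w x‖) ^ 2 := pow_le_pow_left₀ (norm_nonneg _) (h x) 2
      _ = L ^ 2 * ‖w x‖ ^ 2 := by ring
  rw [L2norm, L2norm]
  calc Real.sqrt (∫ t in a..b, ‖f t‖ ^ 2) ≤ Real.sqrt (∫ t in a..b, L ^ 2 * ‖w t‖ ^ 2) :=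
        Real.sqrt_le_sqrt h1
    _ = L * Real.sqrt (∫ t in a..b, ‖w t‖ ^ 2) := by
        rw [intervalIntegral.integral_const_mul, Real.sqrt_mul (sq_nonneg L), Real.sqrt_sq hL]

lemma L2norm_sq (hab : a ≤ b) {f : ℝ → E d} :
    L2norm f a b ^ 2 = ∫ t in a..b, ‖f t‖ ^ 2 := by
  rw [L2norm, Real.sq_sqrt]
  exact intervalIntegral.integral_nonneg hab fun x _ => sq_nonneg _

/-- polynomial functions into `E d` -/
noncomputable def polyfun (p : Fin d → Polynomial ℝ) : ℝ → E d :=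
  fun t => WithLp.toLp 2 (fun i => (p i).eval t)

lemma polyfun_continuous (p : Fin d → Polynomial ℝ) : Continuous (polyfun p) := by
  have h : Continuous (fun t => (fun i => (p i).eval t) : ℝ → (Fin d → ℝ)) :=
    continuous_pi fun i => (p i).continuous
  exact ((EuclideanSpace.equiv (Fin d) ℝ).symm.continuous).comp h

lemma polyfun_hasDerivAt (p : Fin d → Polynomial ℝ) (t : ℝ) :
    HasDerivAt (polyfun p) (polyfun (fun i => (p i).derivative) t) t := by
  classical
  have hrep : ∀ q : Fin d → Polynomial ℝ, ∀ s : ℝ,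
      polyfun q s = ∑ i : Fin d, (q i).eval s • EuclideanSpace.single i (1 : ℝ) := by
    intro q s
    refine ext_ed fun j => ?_
    rw [sum_apply]
    simp [polyfun, smul_apply, EuclideanSpace.single_apply]
  have h : HasDerivAt (fun s => ∑ i : Fin d, (p i).eval s • EuclideanSpace.single i (1 : ℝ))
      (∑ i : Fin d, ((p i).derivative.eval t) • EuclideanSpace.single i (1 : ℝ)) t :=
    HasDerivAt.fun_sum fun i _ => ((p i).hasDerivAt t).smul_const _
  rw [hrep]
  have heq : (polyfun p) = fun s => ∑ i : Fin d, (p i).eval s • EuclideanSpace.single i (1 : ℝ) :=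
    funext fun s => hrep p s
  rw [heq]
  exact h

lemma polyfun_zero_of_L2 (hab : a < b) (p : Fin d → Polynomial ℝ)
    (h : L2norm (polyfun p) a b = 0) : ∀ i, p i = 0 := by
  have hint : (∫ t in a..b, ‖polyfun p t‖ ^ 2) = 0 := by
    have h0 : (0:ℝ) ≤ ∫ t in a..b, ‖polyfun p t‖ ^ 2 :=
      intervalIntegral.integral_nonneg hab.le fun x _ => sq_nonneg _
    rcases h0.eq_or_lt with h0 | h0
    · linarith
    · exact absurd h (by rw [L2norm]; positivity)
  rw [intervalIntegral.integral_of_le hab.le] at hint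
  have hae := (integral_eq_zero_iff_of_nonneg (fun x => sq_nonneg ‖polyfun p x‖)
    (((polyfun_continuous p).norm.pow 2).integrableOn_Ioc)).1 hint
  rw [Filter.EventuallyEq, ae_restrict_iff' measurableSet_Ioc] at hae
  -- bad set
  set B := {s : ℝ | ¬ (s ∈ Set.Ioc a b → ‖polyfun p s‖ ^ 2 = (0:ℝ))} with hB
  have hBnull : volume B = 0 := hae
  have hZinf : (Set.Ioc a b \ B).Infinite := by
    intro hfin
    have h1 : volume (Set.Ioc a b) ≤ volume (Set.Ioc a b \ B) + volume B :=
      (measure_mono (by intro x hx; by_cases hxB : x ∈ B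
                        · exact Set.mem_union_right _ hxB
                        · exact Set.mem_union_left _ ⟨hx, hxB⟩)).trans (measure_union_le _ _)
    rw [hBnull, hfin.measure_zero, add_zero, Real.volume_Ioc] at h1
    simp only [nonpos_iff_eq_zero, ENNReal.ofReal_eq_zero] at h1
    linarith
  intro i
  refine (p i).eq_zero_of_infinite_isRoot (hZinf.mono ?_)
  intro x hx
  have hx0 : ‖polyfun p x‖ ^ 2 = 0 := by
    by_contra hne
    exact hx.2 (fun hcond => absurd (hcond hx.1) hne)
  have : polyfun p x = 0 := by
    have := sq_eq_zero_iff.mp hx0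
    simpa using this
  have hxi : polyfun p x i = 0 := by rw [this]; rfl
  simpa [polyfun, Polynomial.IsRoot] using hxi

end CGAux
end L2

section Interval
open MeasureTheory Real
open scoped RealInnerProductSpace
namespace CGAux
variable {d : ℕ}

set_option maxHeartbeats 1000000 in
lemma interval_exists (F : ℝ → E d → E d) (L : ℝ) (hL : 0 ≤ L)
    (hFcont : Continuous fun p : ℝ × E d => F p.1 p.2)
    (hFlip : ∀ (s : ℝ) (v w : E d), ‖F s v - F s w‖ ≤ L * ‖v - w‖)
    (C_P : ℝ) (hCP : 0 < C_P)
    (hPoincare : ∀ (a b : ℝ), a < b → ∀ (m : ℕ) (y : ℝ → E d), IsPolyDeg m y → y a = 0 →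
      L2norm y a b ≤ (b - a) * C_P * L2norm (deriv y) a b)
    (a b : ℝ) (hab : a < b) (hq : L * ((b - a) * C_P) < 1)
    (r : ℕ) (hr : 1 ≤ r) (ua : E d) :
    ∃ U : ℝ → E d, IsPolyDeg r U ∧ U a = ua ∧
      ∀ φ : ℝ → E d, IsPolyDeg (r - 1) φ →
        (∫ s in a..b, ⟪deriv U s, φ s⟫) = ∫ s in a..b, ⟪F s (U s), φ s⟫ := by
  classical
  let ιL : (Fin r → E d) →ₗ[ℝ] Lp (E d) 2 (volume.restrict (Set.Ioc a b)) :=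
    { toFun := fun c => (mem2 (pfun_continuous r c)).toLp (pfun r c)
      map_add' := by
        intro c c'
        simp only [pfun_add r c c']
        exact MemLp.toLp_add _ _
      map_smul' := by
        intro x c
        simp only [pfun_smul r x c, RingHom.id_apply]
        exact MemLp.toLp_const_smul _ _ }
  set S : Submodule ℝ (Lp (E d) 2 (volume.restrict (Set.Ioc a b))) := LinearMap.range ιL with hS
  haveI : FiniteDimensional ℝ S := ιL.finiteDimensional_range
  haveI : CompleteSpace S := FiniteDimensional.complete ℝ S
  let rep : S → (Fin r → E d) := fun s => (LinearMap.mem_range.mp s.2).choose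
  have hrep : ∀ s : S, ιL (rep s) = (s : Lp (E d) 2 (volume.restrict (Set.Ioc a b))) :=
    fun s => (LinearMap.mem_range.mp s.2).choose_spec
  have hGc : ∀ c : Fin r → E d, Continuous (fun t => F t (afun r a ua c t)) :=
    fun c => hFcont.comp (continuous_id.prodMk (afun_continuous r a ua c))
  let T : S → S := fun s =>
    Submodule.orthogonalProjectionOnto S ((mem2 (hGc (rep s))).toLp (fun t => F t (afun r a ua (rep s) t)))
  -- contraction estimate
  have hdist : ∀ s s' : S, dist (T s) (T s') ≤ (L * ((b - a) * C_P)) * dist s s' := by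
    intro s s'
    set c := rep s with hc
    set c' := rep s' with hc'
    set v := (mem2 (hGc c)).toLp (fun t => F t (afun r a ua c t)) with hv
    set v' := (mem2 (hGc c')).toLp (fun t => F t (afun r a ua c' t)) with hv'
    have h1 : dist (T s) (T s') ≤ ‖v - v'‖ := by
      rw [Subtype.dist_eq, dist_eq_norm]
      have hcoe : (↑(T s) : Lp (E d) 2 (volume.restrict (Set.Ioc a b))) - ↑(T s')
          = ↑(Submodule.orthogonalProjectionOnto S (v - v')) := by
        rw [map_sub]
        rfl
      rw [hcoe]
      calc ‖(↑(Submodule.orthogonalProjectionOnto S (v - v')) : Lp (E d) 2 (volume.restrict (Set.Ioc a b)))‖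
          = ‖Submodule.orthogonalProjectionOnto S (v - v')‖ := rfl
        _ ≤ ‖Submodule.orthogonalProjectionOnto S
              (E := Lp (E d) 2 (volume.restrict (Set.Ioc a b)))‖ * ‖v - v'‖ :=
            ContinuousLinearMap.le_opNorm _ _
        _ ≤ 1 * ‖v - v'‖ :=
            mul_le_mul_of_nonneg_right (Submodule.orthogonalProjectionOnto_norm_le S) (norm_nonneg _)
        _ = ‖v - v'‖ := one_mul _
    have h2 : ‖v - v'‖ = L2norm ((fun t => F t (afun r a ua c t)) - fun t => F t (afun r a ua c' t)) a b := by
      rw [hv, hv', ← MemLp.toLp_sub, norm_toLp_eq hab.le]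
    have h3 : L2norm ((fun t => F t (afun r a ua c t)) - fun t => F t (afun r a ua c' t)) a b
        ≤ L * L2norm (afun r a 0 (c - c')) a b := by
      refine L2norm_le_mul hab.le ((hGc c).sub (hGc c')) (afun_continuous r a 0 (c - c')) hL
        fun s => ?_
      show ‖F s (afun r a ua c s) - F s (afun r a ua c' s)‖ ≤ L * ‖afun r a 0 (c - c') s‖
      rw [← afun_sub r a ua c c' s]
      exact hFlip s _ _
    have h4 : L2norm (afun r a 0 (c - c')) a b
        ≤ (b - a) * C_P * L2norm (pfun r (c - c')) a b := by
      have := hPoincare a b hab r (afun r a 0 (c - c')) (isPolyDeg_afun r a 0 (c - c'))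
        (afun_left r a 0 (c - c'))
      rwa [deriv_afun] at this
    have h5 : L2norm (pfun r (c - c')) a b = dist s s' := by
      have : L2norm (pfun r (c - c')) a b = ‖ιL (c - c')‖ :=
        (norm_toLp_eq hab.le (mem2 (pfun_continuous r (c - c')))).symm
      rw [this, map_sub, hrep, hrep, Subtype.dist_eq, dist_eq_norm]
    calc dist (T s) (T s') ≤ ‖v - v'‖ := h1
      _ = _ := h2
      _ ≤ L * L2norm (afun r a 0 (c - c')) a b := h3
      _ ≤ L * ((b - a) * C_P * L2norm (pfun r (c - c')) a b) :=
          mul_le_mul_of_nonneg_left h4 hL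
      _ = (L * ((b - a) * C_P)) * dist s s' := by rw [h5]; ring
  have hq0 : 0 ≤ L * ((b - a) * C_P) := by
    have : (0:ℝ) ≤ b - a := by linarith
    positivity
  have hcontr : ContractingWith (L * ((b - a) * C_P)).toNNReal T := by
    constructor
    · have h1 : ((L * ((b - a) * C_P)).toNNReal : ℝ) < 1 := by
        rw [Real.coe_toNNReal _ hq0]; exact hq
      exact_mod_cast h1
    · refine LipschitzWith.of_dist_le_mul fun x y => ?_
      calc dist (T x) (T y) ≤ (L * ((b - a) * C_P)) * dist x y := hdist x y
        _ = ((L * ((b - a) * C_P)).toNNReal : ℝ) * dist x y := by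
            rw [Real.coe_toNNReal _ hq0]
  haveI : Nonempty S := ⟨0⟩
  set sstar := ContractingWith.fixedPoint T hcontr with hsstar
  have hfix : T sstar = sstar := hcontr.fixedPoint_isFixedPt
  set cs := rep sstar with hcs
  refine ⟨afun r a ua cs, isPolyDeg_afun r a ua cs, afun_left r a ua cs, ?_⟩
  intro φ hφ
  obtain ⟨cφ, hcφ⟩ := exists_pfun_of_isPolyDeg r hr φ hφ
  have hmem : (mem2 (pfun_continuous r cφ)).toLp (pfun r cφ) ∈ S := ⟨cφ, rfl⟩
  have horth : ⟪(mem2 (hGc cs)).toLp (fun t => F t (afun r a ua cs t))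
      - (↑(Submodule.orthogonalProjectionOnto S ((mem2 (hGc cs)).toLp
        (fun t => F t (afun r a ua cs t)))) : Lp (E d) 2 (volume.restrict (Set.Ioc a b))), (mem2 (pfun_continuous r cφ)).toLp (pfun r cφ)⟫ = 0 :=
    Submodule.starProjection_inner_eq_zero (𝕜 := ℝ)
    ((mem2 (hGc cs)).toLp (fun t => F t (afun r a ua cs t))) _ hmem
  have hproj : (↑(Submodule.orthogonalProjectionOnto S ((mem2 (hGc cs)).toLp
      (fun t => F t (afun r a ua cs t)))) : Lp (E d) 2 (volume.restrict (Set.Ioc a b)))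
      = (mem2 (pfun_continuous r cs)).toLp (pfun r cs) := by
    have h1 : Submodule.orthogonalProjectionOnto S ((mem2 (hGc cs)).toLp
        (fun t => F t (afun r a ua cs t))) = sstar := hfix
    rw [h1, ← hrep sstar]
    rfl
  rw [hproj] at horth
  have h0 : (∫ s in a..b, ⟪F s (afun r a ua cs s) - pfun r cs s, pfun r cφ s⟫) = 0 := by
    have hs := inner_toLp_eq (d := d) hab.le
      ((mem2 (hGc cs)).sub (mem2 (pfun_continuous r cs))) (mem2 (pfun_continuous r cφ))
    rw [← MemLp.toLp_sub (mem2 (hGc cs)) (mem2 (pfun_continuous r cs))] at horth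
    rw [hs] at horth
    simp only [Pi.sub_apply] at horth
    exact horth
  have hint1 : IntervalIntegrable (fun s => ⟪F s (afun r a ua cs s), pfun r cφ s⟫) volume a b :=
    ((hGc cs).inner (pfun_continuous r cφ)).intervalIntegrable a b
  have hint2 : IntervalIntegrable (fun s => ⟪pfun r cs s, pfun r cφ s⟫) volume a b :=
    ((pfun_continuous r cs).inner (pfun_continuous r cφ)).intervalIntegrable a b
  have hsplit : (∫ s in a..b, ⟪F s (afun r a ua cs s) - pfun r cs s, pfun r cφ s⟫)
      = (∫ s in a..b, ⟪F s (afun r a ua cs s), pfun r cφ s⟫)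
        - ∫ s in a..b, ⟪pfun r cs s, pfun r cφ s⟫ := by
    rw [← intervalIntegral.integral_sub hint1 hint2]
    refine intervalIntegral.integral_congr fun s _ => ?_
    rw [inner_sub_left]
  have hφint : ∀ g : ℝ → E d, (∫ s in a..b, ⟪g s, φ s⟫) = ∫ s in a..b, ⟪g s, pfun r cφ s⟫ :=
    fun g => intervalIntegral.integral_congr fun s _ => by rw [hcφ s]
  rw [deriv_afun r a ua cs, hφint, hφint]
  have := h0
  rw [hsplit] at this
  linarith
end CGAux
end Interval

section Unique
open MeasureTheory Real
open scoped RealInnerProductSpace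
namespace CGAux
variable {d : ℕ}

lemma interval_unique (F : ℝ → E d → E d) (L : ℝ) (hL : 0 ≤ L)
    (hFcont : Continuous fun pr : ℝ × E d => F pr.1 pr.2)
    (hFlip : ∀ (s : ℝ) (v w : E d), ‖F s v - F s w‖ ≤ L * ‖v - w‖)
    (C_P : ℝ) (hCP : 0 < C_P)
    (hPoincare : ∀ (a b : ℝ), a < b → ∀ (m : ℕ) (y : ℝ → E d), IsPolyDeg m y → y a = 0 →
      L2norm y a b ≤ (b - a) * C_P * L2norm (deriv y) a b)
    (a b : ℝ) (hab : a < b) (hq : L * ((b - a) * C_P) < 1)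
    (r : ℕ) (hr : 1 ≤ r) (U V : ℝ → E d)
    (hU : IsPolyDeg r U) (hV : IsPolyDeg r V) (hUV : U a = V a)
    (hGU : ∀ φ : ℝ → E d, IsPolyDeg (r - 1) φ →
      (∫ s in a..b, ⟪deriv U s, φ s⟫) = ∫ s in a..b, ⟪F s (U s), φ s⟫)
    (hGV : ∀ φ : ℝ → E d, IsPolyDeg (r - 1) φ →
      (∫ s in a..b, ⟪deriv V s, φ s⟫) = ∫ s in a..b, ⟪F s (V s), φ s⟫) :
    ∀ s, U s = V s := by
  obtain ⟨p, hp, hpe⟩ := hU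
  obtain ⟨q, hqd, hqe⟩ := hV
  have hUeq : U = polyfun p := funext fun s => ext_ed fun i => hpe s i
  have hVeq : V = polyfun q := funext fun s => ext_ed fun i => hqe s i
  subst hUeq hVeq
  set D : Fin d → Polynomial ℝ := fun i => (p i - q i).derivative with hD
  set φ := polyfun D with hφdef
  have hφpoly : IsPolyDeg (r - 1) φ := by
    refine ⟨D, fun i => ?_, fun s i => rfl⟩
    refine le_trans (Polynomial.natDegree_derivative_le _) (Nat.sub_le_sub_right ?_ 1)
    exact le_trans (Polynomial.natDegree_sub_le _ _) (max_le (hp i) (hqd i))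
  have hφcont : Continuous φ := polyfun_continuous D
  have hdU : deriv (polyfun p) = polyfun (fun i => (p i).derivative) :=
    funext fun s => (polyfun_hasDerivAt p s).deriv
  have hdV : deriv (polyfun q) = polyfun (fun i => (q i).derivative) :=
    funext fun s => (polyfun_hasDerivAt q s).deriv
  have hφs : ∀ s, polyfun (fun i => (p i).derivative) s
      - polyfun (fun i => (q i).derivative) s = φ s := by
    intro s; rw [hφdef]; refine ext_ed fun i => ?_
    simp [polyfun, sub_apply, hD, Polynomial.derivative_sub, Polynomial.eval_sub]
  set w := polyfun (fun i => p i - q i) with hw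
  have hwcont : Continuous w := polyfun_continuous _
  have hws : ∀ s, polyfun p s - polyfun q s = w s := by
    intro s; rw [hw]; refine ext_ed fun i => ?_
    simp [polyfun, sub_apply, Polynomial.eval_sub]
  have hwa : w a = 0 := by rw [← hws a, hUV, sub_self]
  have hwpoly : IsPolyDeg r w := by
    refine ⟨fun i => p i - q i, fun i => ?_, fun s i => rfl⟩
    exact le_trans (Polynomial.natDegree_sub_le _ _) (max_le (hp i) (hqd i))
  have hdw : deriv w = φ := by
    rw [hw]
    funext s
    rw [(polyfun_hasDerivAt _ s).deriv]
  have hFU : Continuous (fun s => F s (polyfun p s)) :=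
    hFcont.comp (continuous_id.prodMk (polyfun_continuous p))
  have hFV : Continuous (fun s => F s (polyfun q s)) :=
    hFcont.comp (continuous_id.prodMk (polyfun_continuous q))
  have e1 := hGU φ hφpoly
  have e2 := hGV φ hφpoly
  have hIl : (∫ s in a..b, ⟪deriv (polyfun p) s, φ s⟫)
      - (∫ s in a..b, ⟪deriv (polyfun q) s, φ s⟫) = ∫ s in a..b, ⟪φ s, φ s⟫ := by
    rw [hdU, hdV, ← intervalIntegral.integral_sub
      (((polyfun_continuous _).inner hφcont).intervalIntegrable a b)
      (((polyfun_continuous _).inner hφcont).intervalIntegrable a b)]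
    refine intervalIntegral.integral_congr fun s _ => ?_
    rw [← inner_sub_left, hφs s]
  have hIr : (∫ s in a..b, ⟪F s (polyfun p s), φ s⟫)
      - (∫ s in a..b, ⟪F s (polyfun q s), φ s⟫)
      = ∫ s in a..b, ⟪F s (polyfun p s) - F s (polyfun q s), φ s⟫ := by
    rw [← intervalIntegral.integral_sub ((hFU.inner hφcont).intervalIntegrable a b)
      ((hFV.inner hφcont).intervalIntegrable a b)]
    refine intervalIntegral.integral_congr fun s _ => ?_
    rw [← inner_sub_left]
  set X := L2norm φ a b with hX
  have hXnn : 0 ≤ X := L2norm_nonneg φ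
  have hsq : (∫ s in a..b, ⟪φ s, φ s⟫) = X ^ 2 := by
    rw [hX, L2norm_sq hab.le]
    exact intervalIntegral.integral_congr fun s _ => real_inner_self_eq_norm_sq _
  have hCS : (∫ s in a..b, ⟪F s (polyfun p s) - F s (polyfun q s), φ s⟫)
      ≤ L * ((b - a) * C_P) * X ^ 2 := by
    have c1 : (∫ s in a..b, ⟪F s (polyfun p s) - F s (polyfun q s), φ s⟫)
        ≤ L2norm (fun s => F s (polyfun p s) - F s (polyfun q s)) a b * X :=
      integral_inner_le hab.le (hFU.sub hFV) hφcont
    have c2 : L2norm (fun s => F s (polyfun p s) - F s (polyfun q s)) a b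
        ≤ L * L2norm w a b := by
      refine L2norm_le_mul hab.le (hFU.sub hFV) hwcont hL fun s => ?_
      rw [← hws s]
      exact hFlip s _ _
    have c3 : L2norm w a b ≤ (b - a) * C_P * X := by
      have := hPoincare a b hab r w hwpoly hwa
      rwa [hdw, ← hX] at this
    calc (∫ s in a..b, ⟪F s (polyfun p s) - F s (polyfun q s), φ s⟫)
        ≤ L2norm (fun s => F s (polyfun p s) - F s (polyfun q s)) a b * X := c1
      _ ≤ (L * L2norm w a b) * X := mul_le_mul_of_nonneg_right c2 hXnn
      _ ≤ (L * ((b - a) * C_P * X)) * X := by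
          refine mul_le_mul_of_nonneg_right (mul_le_mul_of_nonneg_left c3 hL) hXnn
      _ = L * ((b - a) * C_P) * X ^ 2 := by ring
  have hkey : X ^ 2 ≤ L * ((b - a) * C_P) * X ^ 2 := by
    calc X ^ 2 = ∫ s in a..b, ⟪φ s, φ s⟫ := hsq.symm
      _ = (∫ s in a..b, ⟪deriv (polyfun p) s, φ s⟫)
          - ∫ s in a..b, ⟪deriv (polyfun q) s, φ s⟫ := hIl.symm
      _ = (∫ s in a..b, ⟪F s (polyfun p s), φ s⟫)
          - ∫ s in a..b, ⟪F s (polyfun q s), φ s⟫ := by rw [e1, e2]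
      _ = ∫ s in a..b, ⟪F s (polyfun p s) - F s (polyfun q s), φ s⟫ := hIr
      _ ≤ L * ((b - a) * C_P) * X ^ 2 := hCS
  have hX0 : X = 0 := by
    by_contra hne
    have hXpos : 0 < X := lt_of_le_of_ne hXnn (Ne.symm hne)
    have h2 : 0 < X ^ 2 := by positivity
    nlinarith
  have hD0 : ∀ i, D i = 0 := polyfun_zero_of_L2 hab D (by rw [← hφdef, ← hX]; exact hX0)
  have hpq : ∀ i, p i = q i := by
    intro i
    have h1 : (p i - q i).natDegree = 0 :=
      Polynomial.natDegree_eq_zero_of_derivative_eq_zero (hD0 i)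
    have h2 : p i - q i = Polynomial.C ((p i - q i).coeff 0) :=
      Polynomial.eq_C_of_natDegree_eq_zero h1
    have h3 : (p i - q i).eval a = 0 := by
      calc (p i - q i).eval a = w a i := by simp [hw, polyfun, sub_apply]
        _ = 0 := by rw [hwa]; rfl
    have h4 : (p i - q i).coeff 0 = 0 := by rwa [h2, Polynomial.eval_C] at h3
    have h5 : p i - q i = 0 := by rw [h2, h4, map_zero]
    exact sub_eq_zero.mp h5
  intro s
  exact ext_ed fun i => by simp [polyfun, hpq i]
end CGAux
end Unique

/-- Main theorem: if `F` is Lipschitz with constant `L`, `A` is uniformly bounded by `C_A`,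
and the maximal time step satisfies `k < 1/((2 C_A + L) C_P)`, then the cG time-stepping
scheme admits a unique solution: on each subinterval there is a unique polynomial piece
with the prescribed initial value satisfying the Galerkin equations, and the pieces match
continuously at the nodes. -/
theorem cG_wellposed {d : ℕ} (N : ℕ) (hN : 0 < N) (t : ℕ → ℝ)
    (ht0 : t 0 = 0) (hmono : ∀ n < N, t n < t (n + 1))
    (r : ℕ → ℕ) (hr : ∀ n < N, 1 ≤ r n)
    (F : ℝ → E d → E d) (L : ℝ) (hL : 0 ≤ L)
    (hFcont : Continuous fun p : ℝ × E d => F p.1 p.2)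
    (hFlip : ∀ (s : ℝ) (v w : E d), ‖F s v - F s w‖ ≤ L * ‖v - w‖)
    (C_A : ℝ) (hCA : 0 ≤ C_A) (C_P : ℝ) (hCP : 0 < C_P)
    (hPoincare : ∀ (a b : ℝ), a < b → ∀ (m : ℕ) (y : ℝ → E d), IsPolyDeg m y → y a = 0 →
      L2norm y a b ≤ (b - a) * C_P * L2norm (deriv y) a b)
    (u0 : E d)
    (hk : ∀ n < N, t (n + 1) - t n < 1 / ((2 * C_A + L) * C_P)) :
    (∃ U : ℕ → ℝ → E d,
      (∀ n < N, IsPolyDeg (r n) (U n)) ∧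
      U 0 (t 0) = u0 ∧
      (∀ n, n + 1 < N → U (n + 1) (t (n + 1)) = U n (t (n + 1))) ∧
      (∀ n < N, ∀ φ : ℝ → E d, IsPolyDeg (r n - 1) φ →
        (∫ s in t n..t (n + 1), ⟪deriv (U n) s, φ s⟫)
          = ∫ s in t n..t (n + 1), ⟪F s (U n s), φ s⟫)) ∧
    (∀ U V : ℕ → ℝ → E d,
      ((∀ n < N, IsPolyDeg (r n) (U n)) ∧
       U 0 (t 0) = u0 ∧
       (∀ n, n + 1 < N → U (n + 1) (t (n + 1)) = U n (t (n + 1))) ∧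
       (∀ n < N, ∀ φ : ℝ → E d, IsPolyDeg (r n - 1) φ →
         (∫ s in t n..t (n + 1), ⟪deriv (U n) s, φ s⟫)
           = ∫ s in t n..t (n + 1), ⟪F s (U n s), φ s⟫)) →
      ((∀ n < N, IsPolyDeg (r n) (V n)) ∧
       V 0 (t 0) = u0 ∧
       (∀ n, n + 1 < N → V (n + 1) (t (n + 1)) = V n (t (n + 1))) ∧
       (∀ n < N, ∀ φ : ℝ → E d, IsPolyDeg (r n - 1) φ →
         (∫ s in t n..t (n + 1), ⟪deriv (V n) s, φ s⟫)
           = ∫ s in t n..t (n + 1), ⟪F s (V n s), φ s⟫)) →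
      ∀ n < N, ∀ s : ℝ, U n s = V n s) := by
  -- contraction bound on each subinterval
  have hqn : ∀ n, n < N → L * ((t (n + 1) - t n) * C_P) < 1 := by
    intro n hn
    have hkn := hk n hn
    have habn := hmono n hn
    by_cases hpos : 0 < 2 * C_A + L
    · have hd : 0 < (2 * C_A + L) * C_P := mul_pos hpos hCP
      have h1 : (t (n + 1) - t n) * ((2 * C_A + L) * C_P) < 1 := (lt_div_iff₀ hd).mp hkn
      nlinarith [mul_nonneg (mul_nonneg hCA (sub_pos.mpr habn).le) hCP.le]
    · exfalso
      have h0 : 2 * C_A + L = 0 := by linarith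
      rw [h0, zero_mul] at hkn
      simp only [div_zero] at hkn
      linarith
  have key : ∀ n, n < N → ∀ ua : E d, ∃ U : ℝ → E d, IsPolyDeg (r n) U ∧ U (t n) = ua ∧
      ∀ φ : ℝ → E d, IsPolyDeg (r n - 1) φ →
        (∫ s in t n..t (n + 1), ⟪deriv U s, φ s⟫)
          = ∫ s in t n..t (n + 1), ⟪F s (U s), φ s⟫ :=
    fun n hn ua => CGAux.interval_exists F L hL hFcont hFlip C_P hCP hPoincare
      (t n) (t (n + 1)) (hmono n hn) (hqn n hn) (r n) (hr n hn) ua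
  choose sol hsol1 hsol2 hsol3 using key
  constructor
  · -- existence
    refine ⟨fun n => Nat.rec (sol 0 hN u0)
      (fun m ih => if h : m + 1 < N then sol (m + 1) h (ih (t (m + 1))) else fun _ => 0) n,
      ?_, ?_, ?_, ?_⟩
    · intro n hn
      cases n with
      | zero => exact hsol1 0 hN u0
      | succ m =>
        show IsPolyDeg (r (m + 1)) (if h : m + 1 < N then _ else _)
        rw [dif_pos hn]
        exact hsol1 (m + 1) hn _
    · exact hsol2 0 hN u0
    · intro n hn
      show (if h : n + 1 < N then sol (n + 1) h _ else fun _ => 0) (t (n + 1)) = _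
      rw [dif_pos hn]
      exact hsol2 (n + 1) hn _
    · intro n hn
      cases n with
      | zero => exact hsol3 0 hN u0
      | succ m =>
        show ∀ φ : ℝ → E d, IsPolyDeg (r (m + 1) - 1) φ → _
        intro φ hφ
        have hrw : (Nat.rec (motive := fun _ => ℝ → E d) (sol 0 hN u0)
            (fun m' ih => if h : m' + 1 < N then sol (m' + 1) h (ih (t (m' + 1))) else fun _ => 0)
            (m + 1)) = sol (m + 1) hn ((Nat.rec (motive := fun _ => ℝ → E d) (sol 0 hN u0)
            (fun m' ih => if h : m' + 1 < N then sol (m' + 1) h (ih (t (m' + 1))) else fun _ => 0)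
            m) (t (m + 1))) := by
          show (if h : m + 1 < N then _ else _) = _
          rw [dif_pos hn]
        beta_reduce
        rw [hrw]
        exact hsol3 (m + 1) hn _ φ hφ
  · -- uniqueness
    intro U V hUp hVp
    obtain ⟨hU1, hU2, hU3, hU4⟩ := hUp
    obtain ⟨hV1, hV2, hV3, hV4⟩ := hVp
    intro n
    induction n with
    | zero =>
      intro h0
      exact CGAux.interval_unique F L hL hFcont hFlip C_P hCP hPoincare
        (t 0) (t 1) (hmono 0 h0) (hqn 0 h0) (r 0) (hr 0 h0) (U 0) (V 0)
        (hU1 0 h0) (hV1 0 h0) (by rw [hU2, hV2]) (hU4 0 h0) (hV4 0 h0)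
    | succ m ih =>
      intro hm
      have hmN : m < N := by omega
      have heq : U (m + 1) (t (m + 1)) = V (m + 1) (t (m + 1)) := by
        rw [hU3 m hm, hV3 m hm, ih hmN]
      exact CGAux.interval_unique F L hL hFcont hFlip C_P hCP hPoincare
        (t (m + 1)) (t (m + 2)) (hmono (m + 1) hm) (hqn (m + 1) hm) (r (m + 1)) (hr (m + 1) hm)
        (U (m + 1)) (V (m + 1)) (hU1 (m + 1) hm) (hV1 (m + 1) hm) heq
        (hU4 (m + 1) hm) (hV4 (m + 1) hm)
end

section
/- Let $\mathsf{F}:[0,T]\times\mathbb{R}^d\to\mathbb{R}^d$ be continuous and Lipschitz in the second variable with constant $L$. For any $a \in \mathbb{R}^d$ and any subinterval $I_n$ with $k_n < (LC_P)^{-1}$, there exists a unique polynomial $\mathcal{U} \in \mathcal{P}^{r_n}(I_n;\mathbb{R}^d)$ with $\mathcal{U}(t_{n-1})=a$ such that $\int_{I_n}(\dot{\mathcal{U}}(t),\varphi(t))\,dt = \int_{I_n}(\mathsf{F}(t,\mathcal{U}(t)),\varphi(t))\,dt$ for all polynomials $\varphi$ of degree at most $r_n-1$. -/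
open MeasureTheory Real
open scoped RealInnerProductSpace

namespace PicardAux

open Polynomial

noncomputable section

/-! ### Generic integral lemmas -/

lemma eqzero_of_integral_eq_zero {tp tn : ℝ} (htn : tp < tn) {f : ℝ → ℝ}
    (hc : Continuous f) (h0 : ∀ t, 0 ≤ f t) (hint : (∫ t in tp..tn, f t) = 0) :
    ∀ t ∈ Set.Ioo tp tn, f t = 0 := by
  intro t0 ht0
  by_contra hne
  have hpos : 0 < f t0 := lt_of_le_of_ne (h0 t0) (Ne.symm hne)
  obtain ⟨ε, hε, hb⟩ : ∃ ε > 0, Metric.ball t0 ε ⊆ f ⁻¹' Set.Ioi 0 :=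
    Metric.isOpen_iff.1 (isOpen_Ioi.preimage hc) t0 hpos
  set l := max tp (t0 - ε) with hl
  set u := min tn (t0 + ε) with hu
  have hlt : l < t0 := max_lt ht0.1 (by linarith)
  have htu : t0 < u := lt_min ht0.2 (by linarith)
  have hsub : Set.Ioo l u ⊆ Metric.ball t0 ε := by
    intro s hs
    rw [Real.ball_eq_Ioo]
    exact ⟨lt_of_le_of_lt (le_max_right _ _) hs.1, lt_of_lt_of_le hs.2 (min_le_right _ _)⟩
  have hposI : 0 < ∫ t in l..u, f t :=
    intervalIntegral.intervalIntegral_pos_of_pos_on (hc.intervalIntegrable _ _)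
      (fun x hx => hb (hsub hx)) (hlt.trans htu)
  have hmono : (∫ t in l..u, f t) ≤ ∫ t in tp..tn, f t :=
    intervalIntegral.integral_mono_interval (le_max_left _ _) (le_of_lt (hlt.trans htu))
      (min_le_left _ _) (Filter.Eventually.of_forall fun t => h0 t) (hc.intervalIntegrable _ _)
  rw [hint] at hmono
  linarith

lemma integral_CS {tp tn : ℝ} (h : tp ≤ tn) {f g : ℝ → ℝ}
    (hf : Continuous f) (hg : Continuous g) :
    (∫ t in tp..tn, f t * g t) ≤
      Real.sqrt (∫ t in tp..tn, f t ^ 2) * Real.sqrt (∫ t in tp..tn, g t ^ 2) := by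
  set A := ∫ t in tp..tn, f t ^ 2 with hA
  set B := ∫ t in tp..tn, f t * g t with hB
  set Cq := ∫ t in tp..tn, g t ^ 2 with hC
  have hA0 : 0 ≤ A := intervalIntegral.integral_nonneg h fun t _ => sq_nonneg _
  have key : ∀ x : ℝ, 0 ≤ Cq * (x * x) + (2 * B) * x + A := by
    intro x
    have h1 : 0 ≤ ∫ t in tp..tn, (x * g t + f t) ^ 2 :=
      intervalIntegral.integral_nonneg h fun t _ => sq_nonneg _
    have h2 : (∫ t in tp..tn, (x * g t + f t) ^ 2)
        = (x * x) * Cq + (2 * x) * B + A := by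
      rw [show (fun t => (x * g t + f t) ^ 2)
          = fun t => ((x * x) * g t ^ 2 + (2 * x) * (f t * g t)) + f t ^ 2 from
        funext fun t => by ring]
      rw [intervalIntegral.integral_add
          (f := fun t => x * x * g t ^ 2 + 2 * x * (f t * g t)) (g := fun t => f t ^ 2)
          ((((continuous_const.mul (hg.pow 2)).add
            (continuous_const.mul (hf.mul hg))).intervalIntegrable _ _ :
              IntervalIntegrable (fun t => x * x * g t ^ 2 + 2 * x * (f t * g t)) volume tp tn))
          ((hf.pow 2).intervalIntegrable _ _ : IntervalIntegrable (fun t => f t ^ 2) volume tp tn),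
        intervalIntegral.integral_add
          (f := fun t => x * x * g t ^ 2) (g := fun t => 2 * x * (f t * g t))
          ((continuous_const.mul (hg.pow 2)).intervalIntegrable _ _ :
            IntervalIntegrable (fun t => x * x * g t ^ 2) volume tp tn)
          ((continuous_const.mul (hf.mul hg)).intervalIntegrable _ _ :
            IntervalIntegrable (fun t => 2 * x * (f t * g t)) volume tp tn),
        intervalIntegral.integral_const_mul, intervalIntegral.integral_const_mul]
    rw [h2] at h1
    nlinarith [h1]
  have hd := discrim_le_zero key
  rw [discrim] at hd
  have hB2 : B ^ 2 ≤ A * Cq := by nlinarith [hd]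
  calc B ≤ |B| := le_abs_self B
    _ = Real.sqrt (B ^ 2) := (Real.sqrt_sq_eq_abs B).symm
    _ ≤ Real.sqrt (A * Cq) := Real.sqrt_le_sqrt hB2
    _ = Real.sqrt A * Real.sqrt Cq := Real.sqrt_mul hA0 Cq

lemma integral_inner_le {d : ℕ} {tp tn : ℝ} (h : tp ≤ tn) {f g : ℝ → E d}
    (hf : Continuous f) (hg : Continuous g) :
    (∫ t in tp..tn, ⟪f t, g t⟫) ≤ L2norm f tp tn * L2norm g tp tn := by
  have h1 : (∫ t in tp..tn, ⟪f t, g t⟫) ≤ ∫ t in tp..tn, ‖f t‖ * ‖g t‖ :=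
    intervalIntegral.integral_mono_on h ((hf.inner hg).intervalIntegrable _ _)
      ((hf.norm.mul hg.norm).intervalIntegrable _ _) fun t _ => real_inner_le_norm _ _
  exact h1.trans (integral_CS h hf.norm hg.norm)

lemma L2norm_nonneg {d : ℕ} (f : ℝ → E d) (a b : ℝ) : 0 ≤ L2norm f a b :=
  Real.sqrt_nonneg _


def Pint (P : ℝ[X]) : ℝ[X] := P.sum fun n c => C (c / (n + 1 : ℝ)) * X ^ (n + 1)

lemma derivative_Pint (P : ℝ[X]) : derivative (Pint P) = P := by
  conv_rhs => rw [← sum_C_mul_X_pow_eq P]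
  rw [Pint, Polynomial.sum_def, Polynomial.sum_def, map_sum]
  refine Finset.sum_congr rfl fun n _ => ?_
  rw [derivative_C_mul_X_pow, Nat.add_sub_cancel]
  congr 2
  push_cast
  field_simp

lemma natDegree_Pint_le (P : ℝ[X]) : (Pint P).natDegree ≤ P.natDegree + 1 := by
  rw [Pint, Polynomial.sum_def]
  refine natDegree_sum_le_of_forall_le _ _ fun n hn => ?_
  refine natDegree_mul_le.trans ?_
  have h1 : n ≤ P.natDegree := le_natDegree_of_mem_supp n hn
  simp only [natDegree_C, natDegree_X_pow]
  omega

lemma Pint_zero : Pint (0 : ℝ[X]) = 0 := by simp [Pint]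

def Pint0 (tp : ℝ) (P : ℝ[X]) : ℝ[X] := Pint P - C ((Pint P).eval tp)

lemma derivative_Pint0 (tp : ℝ) (P : ℝ[X]) : derivative (Pint0 tp P) = P := by
  rw [Pint0, derivative_sub, derivative_C, sub_zero, derivative_Pint]

lemma eval_Pint0 (tp : ℝ) (P : ℝ[X]) : (Pint0 tp P).eval tp = 0 := by
  simp [Pint0]

lemma natDegree_Pint0_le (tp : ℝ) (P : ℝ[X]) : (Pint0 tp P).natDegree ≤ P.natDegree + 1 := by
  refine (natDegree_sub_le _ _).trans (max_le (natDegree_Pint_le P) ?_)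
  simp

lemma natDegree_Pint0_le_of_degreeLT {rn : ℕ} (hrn : 1 ≤ rn) (tp : ℝ) {P : ℝ[X]}
    (hP : P.degree < (rn : WithBot ℕ)) : (Pint0 tp P).natDegree ≤ rn := by
  rcases eq_or_ne P 0 with rfl | h0
  · simp [Pint0, Pint_zero]
  · have h := (natDegree_lt_iff_degree_lt h0).2 hP
    exact (natDegree_Pint0_le tp P).trans (by omega)


variable {d rn : ℕ} {tp tn : ℝ}

variable {d rn : ℕ} {tp tn : ℝ}

def PV (d rn : ℕ) (tp tn : ℝ) : Type := Fin d → Polynomial.degreeLT ℝ rn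

namespace PV

instance : AddCommGroup (PV d rn tp tn) :=
  inferInstanceAs (AddCommGroup (Fin d → Polynomial.degreeLT ℝ rn))

instance : Module ℝ (PV d rn tp tn) :=
  inferInstanceAs (Module ℝ (Fin d → Polynomial.degreeLT ℝ rn))

instance : FiniteDimensional ℝ (Polynomial.degreeLT ℝ rn) :=
  Module.Finite.equiv (Polynomial.degreeLTEquiv ℝ rn).symm

instance : FiniteDimensional ℝ (PV d rn tp tn) :=
  inferInstanceAs (FiniteDimensional ℝ (Fin d → Polynomial.degreeLT ℝ rn))

instance : Nonempty (PV d rn tp tn) := ⟨fun _ => 0⟩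

def ev (v : PV d rn tp tn) : ℝ → E d := fun t => WithLp.toLp 2 (fun i => ((v i : ℝ[X])).eval t)

lemma continuous_ev (v : PV d rn tp tn) : Continuous (ev v) := by
  have h : Continuous fun t : ℝ => (fun i => ((v i : ℝ[X])).eval t : Fin d → ℝ) :=
    continuous_pi fun i => (v i : ℝ[X]).continuous
  exact ((EuclideanSpace.equiv (Fin d) ℝ).symm.continuous.comp h : _)

lemma ev_add (v w : PV d rn tp tn) (t : ℝ) : ev (v + w) t = ev v t + ev w t := by
  ext i
  show Polynomial.eval t ((v i : ℝ[X]) + (w i : ℝ[X])) = _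
  simp [ev]

lemma ev_sub (v w : PV d rn tp tn) (t : ℝ) : ev (v - w) t = ev v t - ev w t := by
  ext i
  show Polynomial.eval t ((v i : ℝ[X]) - (w i : ℝ[X])) = _
  simp [ev]

lemma ev_smul (r : ℝ) (v : PV d rn tp tn) (t : ℝ) : ev (r • v) t = r • ev v t := by
  ext i
  show Polynomial.eval t (r • (v i : ℝ[X])) = r * Polynomial.eval t (v i : ℝ[X])
  simp


variable [Fact (tp < tn)]

instance core : InnerProductSpace.Core ℝ (PV d rn tp tn) where
  inner v w := ∫ t in tp..tn, ⟪ev v t, ev w t⟫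
  conj_inner_symm v w := by
    simp only [conj_trivial]
    simp_rw [real_inner_comm]
  re_inner_nonneg v := by
    simp only [RCLike.re_to_real]
    exact intervalIntegral.integral_nonneg (le_of_lt Fact.out) fun t _ => real_inner_self_nonneg
  add_left x y z := by
    simp_rw [ev_add, inner_add_left]
    exact intervalIntegral.integral_add
      (((continuous_ev x).inner (continuous_ev z)).intervalIntegrable _ _)
      (((continuous_ev y).inner (continuous_ev z)).intervalIntegrable _ _)
  smul_left x y r := by
    simp only [conj_trivial]
    simp_rw [ev_smul, real_inner_smul_left]
    exact intervalIntegral.integral_const_mul r _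
  definite v hv := by
    have h0 : ∀ t, 0 ≤ ⟪ev v t, ev v t⟫ := fun t => real_inner_self_nonneg
    have hz : ∀ t ∈ Set.Ioo tp tn, ⟪ev v t, ev v t⟫ = 0 :=
      eqzero_of_integral_eq_zero Fact.out
        ((continuous_ev v).inner (continuous_ev v)) h0 hv
    funext i
    have hroots : ∀ t ∈ Set.Ioo tp tn, ((v i : ℝ[X])).eval t = 0 := by
      intro t ht
      have h1 := hz t ht
      have h2 : ev v t = 0 := by
        rwa [real_inner_self_eq_norm_sq, pow_eq_zero_iff (two_ne_zero), norm_eq_zero] at h1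
      have := congrArg (fun x : E d => x i) h2
      simpa [ev] using this
    have hvi : (v i : ℝ[X]) = 0 := by
      refine Polynomial.eq_zero_of_infinite_isRoot _ ?_
      refine Set.Infinite.mono ?_ (Set.Ioo_infinite (Fact.out : tp < tn))
      intro t ht
      exact hroots t ht
    show v i = 0
    exact Subtype.ext hvi

instance : NormedAddCommGroup (PV d rn tp tn) :=
  @InnerProductSpace.Core.toNormedAddCommGroup ℝ (PV d rn tp tn) _ _ _ core

instance : InnerProductSpace ℝ (PV d rn tp tn) := InnerProductSpace.ofCore core.toCore

instance : CompleteSpace (PV d rn tp tn) := FiniteDimensional.complete ℝ _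

lemma inner_def (v w : PV d rn tp tn) : ⟪v, w⟫ = ∫ t in tp..tn, ⟪ev v t, ev w t⟫ := rfl

lemma norm_def (v : PV d rn tp tn) : ‖v‖ = L2norm (ev v) tp tn := by
  rw [norm_eq_sqrt_real_inner, inner_def, L2norm]
  congr 1
  refine intervalIntegral.integral_congr fun t _ => ?_
  rw [real_inner_self_eq_norm_sq]

lemma riesz (f : ℝ → E d) (hf : Continuous f) :
    ∃ q : PV d rn tp tn, ∀ w, ⟪q, w⟫ = ∫ t in tp..tn, ⟪f t, ev w t⟫ := by
  let ℓ : PV d rn tp tn →ₗ[ℝ] ℝ :=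
    { toFun := fun w => ∫ t in tp..tn, ⟪f t, ev w t⟫
      map_add' := fun w w' => by
        simp_rw [ev_add, inner_add_right]
        exact intervalIntegral.integral_add
          ((hf.inner (continuous_ev w)).intervalIntegrable _ _)
          ((hf.inner (continuous_ev w')).intervalIntegrable _ _)
      map_smul' := fun r w => by
        simp only [RingHom.id_apply, smul_eq_mul]
        simp_rw [ev_smul, real_inner_smul_right]
        exact intervalIntegral.integral_const_mul r _ }
  let ℓC : PV d rn tp tn →L[ℝ] ℝ := ⟨ℓ, ℓ.continuous_of_finiteDimensional⟩
  refine ⟨(InnerProductSpace.toDual ℝ _).symm ℓC, fun w => ?_⟩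
  exact InnerProductSpace.toDual_symm_apply

lemma norm_le_of_inner_eq {q : PV d rn tp tn} {f : ℝ → E d} (hf : Continuous f)
    (hq : ∀ w, ⟪q, w⟫ = ∫ t in tp..tn, ⟪f t, ev w t⟫) : ‖q‖ ≤ L2norm f tp tn := by
  have h2 : ‖q‖ * ‖q‖ ≤ L2norm f tp tn * ‖q‖ := by
    rw [← real_inner_self_eq_norm_mul_norm, hq q]
    calc (∫ t in tp..tn, ⟪f t, ev q t⟫)
        ≤ L2norm f tp tn * L2norm (ev q) tp tn :=
          integral_inner_le (le_of_lt Fact.out) hf (continuous_ev q)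
      _ = L2norm f tp tn * ‖q‖ := by rw [norm_def]
  rcases eq_or_lt_of_le (norm_nonneg q) with h | h
  · rw [← h]; exact L2norm_nonneg f tp tn
  · exact le_of_mul_le_mul_right h2 h

def Ufun (a : E d) (q : PV d rn tp tn) : ℝ → E d :=
  fun t => WithLp.toLp 2 (fun i => a i + (Pint0 tp ((q i : ℝ[X]))).eval t)

lemma Ufun_tp (a : E d) (q : PV d rn tp tn) : Ufun a q tp = a := by
  ext i
  show a i + (Pint0 tp ((q i : ℝ[X]))).eval tp = a i
  rw [eval_Pint0, add_zero]

lemma continuous_Ufun (a : E d) (q : PV d rn tp tn) : Continuous (Ufun a q) := by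
  have h : Continuous fun t : ℝ =>
      (fun i => a i + (Pint0 tp ((q i : ℝ[X]))).eval t : Fin d → ℝ) :=
    continuous_pi fun i => continuous_const.add (Pint0 tp ((q i : ℝ[X]))).continuous
  exact ((EuclideanSpace.equiv (Fin d) ℝ).symm.continuous.comp h : _)

lemma hasDerivAt_Ufun (a : E d) (q : PV d rn tp tn) (t : ℝ) :
    HasDerivAt (Ufun a q) (ev q t) t := by
  have h : ∀ i, HasDerivAt (fun s : ℝ => a i + (Pint0 tp ((q i : ℝ[X]))).eval s)
      (((q i : ℝ[X])).eval t) t := by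
    intro i
    have h1 := ((Pint0 tp ((q i : ℝ[X]))).hasDerivAt t).const_add (a i)
    rwa [derivative_Pint0] at h1
  have h2 : HasDerivAt
      (fun s : ℝ => (fun i => a i + (Pint0 tp ((q i : ℝ[X]))).eval s : Fin d → ℝ))
      (fun i => ((q i : ℝ[X])).eval t) t := hasDerivAt_pi.2 h
  exact ((EuclideanSpace.equiv (Fin d) ℝ).symm.toContinuousLinearMap.hasFDerivAt.comp_hasDerivAt
    t h2 : _)

lemma deriv_Ufun (a : E d) (q : PV d rn tp tn) : deriv (Ufun a q) = ev q :=
  funext fun t => (hasDerivAt_Ufun a q t).deriv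

lemma isPolyDeg_Ufun (hrn : 1 ≤ rn) (a : E d) (q : PV d rn tp tn) :
    IsPolyDeg rn (Ufun a q) := by
  refine ⟨fun i => C (a i) + Pint0 tp ((q i : ℝ[X])), fun i => ?_,
    fun t i => by simp [Ufun]⟩
  refine (natDegree_add_le _ _).trans (max_le (by simp) ?_)
  exact natDegree_Pint0_le_of_degreeLT hrn tp (Polynomial.mem_degreeLT.1 (q i).2)

lemma isPolyDeg_ev (hrn : 1 ≤ rn) (w : PV d rn tp tn) : IsPolyDeg (rn - 1) (ev w) := by
  refine ⟨fun i => (w i : ℝ[X]), fun i => ?_, fun t i => rfl⟩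
  show ((w i : ℝ[X])).natDegree ≤ rn - 1
  have hd := Polynomial.mem_degreeLT.1 (w i).2
  rcases eq_or_ne ((w i : ℝ[X])) 0 with h0 | h0
  · rw [h0]; simp
  · have := (natDegree_lt_iff_degree_lt h0).2 hd
    omega

lemma exists_pv_of_isPolyDeg (tp tn : ℝ) (hrn : 1 ≤ rn) {φ : ℝ → E d}
    (hφ : IsPolyDeg (rn - 1) φ) : ∃ w : PV d rn tp tn, ev w = φ := by
  obtain ⟨p, hdeg, hval⟩ := hφ
  have hmem : ∀ i, p i ∈ degreeLT ℝ rn := by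
    intro i
    rw [Polynomial.mem_degreeLT]
    refine degree_le_natDegree.trans_lt ?_
    exact_mod_cast Nat.lt_of_le_of_lt (hdeg i) (by omega)
  refine ⟨fun i => ⟨p i, hmem i⟩, ?_⟩
  funext t
  ext i
  exact (hval t i).symm

lemma exists_q_of_isPolyDeg (tn : ℝ) (hrn : 1 ≤ rn) {U' : ℝ → E d} {a : E d}
    (hP : IsPolyDeg rn U') (ha : U' tp = a) :
    ∃ q : PV d rn tp tn, U' = Ufun a q := by
  obtain ⟨p, hdeg, hval⟩ := hP
  have hmem : ∀ i, derivative (p i) ∈ degreeLT ℝ rn := by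
    intro i
    rw [Polynomial.mem_degreeLT]
    rcases eq_or_ne (p i) 0 with h0 | h0
    · rw [h0]
      rw [derivative_zero, degree_zero]
      exact bot_lt_iff_ne_bot.2 (by simp)
    · exact lt_of_lt_of_le (degree_derivative_lt h0)
        (degree_le_natDegree.trans (by exact_mod_cast hdeg i))
  set q : PV d rn tp tn := fun i => ⟨derivative (p i), hmem i⟩ with hqdef
  have hpoly : ∀ i, p i = C (a i) + Pint0 tp (derivative (p i)) := by
    intro i
    have hD : derivative (p i - (C (a i) + Pint0 tp (derivative (p i)))) = 0 := by
      rw [derivative_sub, derivative_add, derivative_C, derivative_Pint0, zero_add, sub_self]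
    have hC := Polynomial.eq_C_of_derivative_eq_zero hD
    have heval : (p i - (C (a i) + Pint0 tp (derivative (p i)))).eval tp = 0 := by
      have h1 : (p i).eval tp = a i := by
        rw [← hval tp i, ha]
      simp [eval_sub, eval_add, eval_C, eval_Pint0, h1]
    have hz : p i - (C (a i) + Pint0 tp (derivative (p i))) = 0 := by
      have hc0 : (p i - (C (a i) + Pint0 tp (derivative (p i)))).coeff 0 = 0 := by
        have h2 := heval
        rw [hC, eval_C] at h2
        exact h2
      rw [hC, hc0, map_zero]
    exact sub_eq_zero.1 hz
  refine ⟨q, ?_⟩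
  funext t
  ext i
  show U' t i = a i + (Pint0 tp ((q i : ℝ[X]))).eval t
  rw [hval t i]
  conv_lhs => rw [hpoly i]
  simp [hqdef]

end PV

lemma L2_lip {d : ℕ} {tp tn : ℝ} (h : tp ≤ tn) {F : ℝ → E d → E d} {L : ℝ} (hL : 0 ≤ L)
    (hFlip : ∀ (s : ℝ) (v w : E d), ‖F s v - F s w‖ ≤ L * ‖v - w‖)
    {u v : ℝ → E d} (hΔF : Continuous fun s => F s (u s) - F s (v s))
    (hΔ : Continuous fun s => u s - v s) :
    L2norm (fun s => F s (u s) - F s (v s)) tp tn ≤ L * L2norm (fun s => u s - v s) tp tn := by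
  rw [L2norm, L2norm, ← Real.sqrt_sq hL, ← Real.sqrt_mul (sq_nonneg L)]
  apply Real.sqrt_le_sqrt
  rw [← intervalIntegral.integral_const_mul]
  refine intervalIntegral.integral_mono_on h ((hΔF.norm.pow 2).intervalIntegrable _ _)
    ((continuous_const.mul (hΔ.norm.pow 2)).intervalIntegrable _ _) fun s _ => ?_
  have h1 := hFlip s (u s) (v s)
  calc ‖F s (u s) - F s (v s)‖ ^ 2 ≤ (L * ‖u s - v s‖) ^ 2 :=
        pow_le_pow_left₀ (norm_nonneg _) h1 2
    _ = L ^ 2 * ‖u s - v s‖ ^ 2 := by ring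

end

end PicardAux


open PicardAux

/-- Specialization of the well-posedness theorem to the Picard linearization `A ≡ 0`:
if `F` is continuous and Lipschitz with constant `L` and `kₙ < (L C_P)⁻¹`, then for any
initial value `a` there is a unique polynomial `U` of degree `rₙ` with `U(tₙ₋₁) = a`
satisfying the cG equations on `Iₙ`. -/
theorem picard_cG_wellposed {d : ℕ} (tp tn : ℝ) (htn : tp < tn) (rn : ℕ) (hrn : 1 ≤ rn)
    (F : ℝ → E d → E d) (L : ℝ) (hL : 0 ≤ L)
    (hFcont : Continuous fun p : ℝ × E d => F p.1 p.2)
    (hFlip : ∀ (s : ℝ) (v w : E d), ‖F s v - F s w‖ ≤ L * ‖v - w‖)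
    (C_P : ℝ) (hCP : 0 < C_P)
    (hPoincare : ∀ y : ℝ → E d, IsPolyDeg rn y → y tp = 0 →
      L2norm y tp tn ≤ (tn - tp) * C_P * L2norm (deriv y) tp tn)
    (hk : tn - tp < (L * C_P)⁻¹) (a : E d) :
    ∃! U : ℝ → E d, IsPolyDeg rn U ∧ U tp = a ∧
      ∀ φ : ℝ → E d, IsPolyDeg (rn - 1) φ →
        (∫ s in tp..tn, ⟪deriv U s, φ s⟫) = ∫ s in tp..tn, ⟪F s (U s), φ s⟫ := by
  classical
  haveI : Fact (tp < tn) := ⟨htn⟩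
  have hk0 : 0 ≤ tn - tp := by linarith
  have hLpos : 0 < L := by
    rcases hL.lt_or_eq with h | h
    · exact h
    · exfalso
      rw [← h, zero_mul, inv_zero] at hk
      linarith
  have hLC : 0 < L * C_P := mul_pos hLpos hCP
  have hc1 : L * ((tn - tp) * C_P) < 1 := by
    have h2 := mul_lt_mul_of_pos_right hk hLC
    rw [inv_mul_cancel₀ (ne_of_gt hLC)] at h2
    nlinarith [h2]
  have hc0 : 0 ≤ L * ((tn - tp) * C_P) := mul_nonneg hL (mul_nonneg hk0 hCP.le)
  have hUcont : ∀ q : PV d rn tp tn, Continuous fun s => F s (PV.Ufun a q s) := fun q =>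
    hFcont.comp (continuous_id.prodMk (PV.continuous_Ufun a q))
  have hgex : ∀ q : PV d rn tp tn, ∃ g : PV d rn tp tn,
      ∀ w, ⟪g, w⟫ = ∫ s in tp..tn, ⟪F s (PV.Ufun a q s), PV.ev w s⟫ :=
    fun q => PV.riesz _ (hUcont q)
  choose g hg using hgex
  have key : ∀ q1 q2 : PV d rn tp tn,
      ‖g q1 - g q2‖ ≤ L * ((tn - tp) * C_P) * ‖q1 - q2‖ := by
    intro q1 q2
    have hΔF : Continuous fun s => F s (PV.Ufun a q1 s) - F s (PV.Ufun a q2 s) :=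
      (hUcont q1).sub (hUcont q2)
    have hΔU : Continuous fun s => PV.Ufun a q1 s - PV.Ufun a q2 s :=
      (PV.continuous_Ufun a q1).sub (PV.continuous_Ufun a q2)
    have hinner : ∀ w, ⟪g q1 - g q2, w⟫
        = ∫ s in tp..tn, ⟪F s (PV.Ufun a q1 s) - F s (PV.Ufun a q2 s), PV.ev w s⟫ := by
      intro w
      rw [inner_sub_left, hg, hg, ← intervalIntegral.integral_sub
        (((hUcont q1).inner (PV.continuous_ev w)).intervalIntegrable _ _)
        (((hUcont q2).inner (PV.continuous_ev w)).intervalIntegrable _ _)]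
      simp_rw [inner_sub_left]
    have h1 : ‖g q1 - g q2‖
        ≤ L2norm (fun s => F s (PV.Ufun a q1 s) - F s (PV.Ufun a q2 s)) tp tn :=
      PV.norm_le_of_inner_eq hΔF hinner
    have h2 := L2_lip (le_of_lt htn) hL hFlip hΔF hΔU
    have hy : IsPolyDeg rn (fun s => PV.Ufun a q1 s - PV.Ufun a q2 s) := by
      refine ⟨fun i => Pint0 tp ((q1 i : Polynomial ℝ)) - Pint0 tp ((q2 i : Polynomial ℝ)),
        fun i => ?_, fun t i => ?_⟩
      · refine (Polynomial.natDegree_sub_le _ _).trans (max_le ?_ ?_)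
        · exact natDegree_Pint0_le_of_degreeLT hrn tp (Polynomial.mem_degreeLT.1 (q1 i).2)
        · exact natDegree_Pint0_le_of_degreeLT hrn tp (Polynomial.mem_degreeLT.1 (q2 i).2)
      · show (a i + (Pint0 tp ((q1 i : Polynomial ℝ))).eval t)
            - (a i + (Pint0 tp ((q2 i : Polynomial ℝ))).eval t) = _
        simp
    have hy0 : (fun s => PV.Ufun a q1 s - PV.Ufun a q2 s) tp = 0 := by
      show PV.Ufun a q1 tp - PV.Ufun a q2 tp = 0
      rw [PV.Ufun_tp, PV.Ufun_tp, sub_self]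
    have h3 := hPoincare _ hy hy0
    have hd : deriv (fun s => PV.Ufun a q1 s - PV.Ufun a q2 s) = PV.ev (q1 - q2) := by
      funext s
      have hds := ((PV.hasDerivAt_Ufun a q1 s).sub (PV.hasDerivAt_Ufun a q2 s)).deriv
      exact hds.trans (PV.ev_sub _ _ _).symm
    rw [hd, ← PV.norm_def] at h3
    calc ‖g q1 - g q2‖
        ≤ L2norm (fun s => F s (PV.Ufun a q1 s) - F s (PV.Ufun a q2 s)) tp tn := h1
      _ ≤ L * L2norm (fun s => PV.Ufun a q1 s - PV.Ufun a q2 s) tp tn := h2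
      _ ≤ L * ((tn - tp) * C_P * ‖q1 - q2‖) := mul_le_mul_of_nonneg_left h3 hL
      _ = L * ((tn - tp) * C_P) * ‖q1 - q2‖ := by ring
  have hKc : ((Real.toNNReal (L * ((tn - tp) * C_P)) : NNReal) : ℝ) = L * ((tn - tp) * C_P) :=
    Real.coe_toNNReal _ hc0
  have hcontr : ContractingWith (Real.toNNReal (L * ((tn - tp) * C_P))) g := by
    constructor
    · rw [← NNReal.coe_lt_coe, hKc, NNReal.coe_one]
      exact hc1
    · refine LipschitzWith.of_dist_le_mul fun x y => ?_
      rw [dist_eq_norm, dist_eq_norm, hKc]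
      exact key x y
  set qs := ContractingWith.fixedPoint g hcontr with hqsdef
  have hfix : g qs = qs := hcontr.fixedPoint_isFixedPt
  refine ⟨PV.Ufun a qs, ⟨PV.isPolyDeg_Ufun hrn a qs, PV.Ufun_tp a qs, ?_⟩, ?_⟩
  · intro φ hφ
    obtain ⟨w, hw⟩ := PV.exists_pv_of_isPolyDeg tp tn hrn hφ
    rw [← hw]
    calc (∫ s in tp..tn, ⟪deriv (PV.Ufun a qs) s, PV.ev w s⟫)
        = ⟪qs, w⟫ := by rw [PV.deriv_Ufun]; exact (PV.inner_def qs w).symm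
      _ = ⟪g qs, w⟫ := by rw [hfix]
      _ = ∫ s in tp..tn, ⟪F s (PV.Ufun a qs s), PV.ev w s⟫ := hg qs w
  · rintro U' ⟨hP, ha, hweak⟩
    obtain ⟨q', rfl⟩ := PV.exists_q_of_isPolyDeg tn hrn hP ha
    have hfix' : g q' = q' := by
      refine ext_inner_right ℝ fun w => ?_
      rw [hg q' w]
      have h5 := hweak (PV.ev w) (PV.isPolyDeg_ev hrn w)
      rw [PV.deriv_Ufun] at h5
      rw [← h5]
      exact (PV.inner_def q' w).symm
    have hq : q' = qs := hcontr.fixedPoint_unique hfix'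
    rw [hq]
end
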